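/- arXiv:0710.0010 — 8 statements merged into one kernel-verified Lean document; each statement's English description precedes it below -/
import Mathlib

section
/- For a degree-one polynomial y(t) = a₀ + a₁ t and any T > 0 and t ≥ T, the convolution ∫₀^T (6/T³)(T - 2τ) · y(t - τ) dτ equals the derivative y'(t) = a₁. -/
theorem stmt0 (a₀ a₁ T t : ℝ) (hT : 0 < T) (ht : T ≤ t)
    (y : ℝ → ℝ) (hy : ∀ s, y s = a₀ + a₁ * s) :
    ∫ τ in (0:ℝ)..T, (6 / T ^ 3) * (T - 2 * τ) * y (t - τ) = a₁ := by
  have hT3 : T ^ 3 ≠ 0 := by positivity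
  set c : ℝ := a₀ + a₁ * t with hc
  have key : ∀ x : ℝ, HasDerivAt
      (fun τ : ℝ => (6 / T ^ 3) * (c * T * τ - (2 * c + a₁ * T) * τ ^ 2 / 2 + 2 * a₁ * τ ^ 3 / 3))
      ((6 / T ^ 3) * (T - 2 * x) * (a₀ + a₁ * (t - x))) x := by
    intro x
    have h1 : HasDerivAt (fun τ : ℝ => c * T * τ - (2 * c + a₁ * T) * τ ^ 2 / 2 + 2 * a₁ * τ ^ 3 / 3)
        (c * T - (2 * c + a₁ * T) * (2 * x) / 2 + 2 * a₁ * (3 * x ^ 2) / 3) x := by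
      have ha : HasDerivAt (fun τ : ℝ => c * T * τ) (c * T) x := by
        simpa using (hasDerivAt_id x).const_mul (c * T)
      have hb : HasDerivAt (fun τ : ℝ => (2 * c + a₁ * T) * τ ^ 2 / 2)
          ((2 * c + a₁ * T) * (2 * x) / 2) x := by
        simpa [mul_comm, mul_assoc, mul_left_comm] using
          (((hasDerivAt_pow 2 x).const_mul (2 * c + a₁ * T)).div_const 2)
      have hcc : HasDerivAt (fun τ : ℝ => 2 * a₁ * τ ^ 3 / 3)
          (2 * a₁ * (3 * x ^ 2) / 3) x := by
        simpa [mul_comm, mul_assoc, mul_left_comm] using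
          (((hasDerivAt_pow 3 x).const_mul (2 * a₁)).div_const 3)
      exact (ha.sub hb).add hcc
    have h2 := h1.const_mul (6 / T ^ 3)
    refine h2.congr_deriv ?_
    rw [hc]; ring
  have hcont : IntervalIntegrable
      (fun τ : ℝ => (6 / T ^ 3) * (T - 2 * τ) * (a₀ + a₁ * (t - τ))) MeasureTheory.volume 0 T := by
    apply Continuous.intervalIntegrable
    continuity
  calc ∫ τ in (0:ℝ)..T, (6 / T ^ 3) * (T - 2 * τ) * y (t - τ)
      = ∫ τ in (0:ℝ)..T, (6 / T ^ 3) * (T - 2 * τ) * (a₀ + a₁ * (t - τ)) := by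
        simp only [hy]
    _ = (6 / T ^ 3) * (c * T * T - (2 * c + a₁ * T) * T ^ 2 / 2 + 2 * a₁ * T ^ 3 / 3)
        - (6 / T ^ 3) * (c * T * 0 - (2 * c + a₁ * T) * 0 ^ 2 / 2 + 2 * a₁ * 0 ^ 3 / 3) := by
        exact intervalIntegral.integral_eq_sub_of_hasDerivAt (fun x _ => key x) hcont
    _ = a₁ := by field_simp; ring
end

section
/- Let W be the (N+1)×(N+1) real matrix with entries W i j = -(t₀ - t₁)^(i+j+1) / (i!·j!·(i+j+1)) (indices i, j from 0 to N), where t₀ < t₁. Then W is invertible, and its inverse V has entries V i j = (i!·j!·(i+j+1) / (t₁ - t₀)^(i+j+1)) · C(N+1+i, N-j) · C(N+1+j, N-i) · C(i+j, i)². -/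
open Finset Polynomial

private lemma fact_prod (k : ℕ) : ∀ n : ℕ,
    (k.factorial : ℝ) * ∏ m ∈ Finset.range n, ((k : ℝ) + 1 + m) = ((n + k).factorial : ℝ)
  | 0 => by simp
  | n + 1 => by
    rw [Finset.prod_range_succ, ← mul_assoc, fact_prod k n]
    have : (n + 1 + k).factorial = (n + k).factorial * (n + k + 1) := by
      rw [show n + 1 + k = (n + k) + 1 by omega, Nat.factorial_succ]; ring
    rw [this]; push_cast; ring

private lemma prod_up (i : ℕ) : ∏ m ∈ Finset.range i, ((i : ℝ) - m) = i.factorial := by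
  induction i with
  | zero => simp
  | succ n ih =>
    rw [Finset.prod_range_succ']
    have h1 : ∏ m ∈ Finset.range n, ((n : ℝ) + 1 - (m + 1)) = n.factorial := by
      rw [← ih]; apply Finset.prod_congr rfl; intro m _; push_cast; ring
    push_cast
    rw [h1]
    rw [Nat.factorial_succ]; push_cast; ring

private lemma prod_low (i : ℕ) : ∏ m ∈ Finset.range i, ((m : ℝ) - i) = (-1) ^ i * i.factorial := by
  have : ∀ m ∈ Finset.range i, ((m : ℝ) - i) = (-1) * ((i : ℝ) - m) := by intros; ring
  rw [Finset.prod_congr rfl this, Finset.prod_mul_distrib, Finset.prod_const, Finset.card_range,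
    prod_up]

private lemma prod_hi (i n : ℕ) : ∏ m ∈ Finset.Ico (i + 1) n, ((m : ℝ) - i) = (n - 1 - i).factorial := by
  rw [Finset.prod_Ico_eq_prod_range]
  have h1 : ∀ m ∈ Finset.range (n - (i+1)), (((i + 1 + m : ℕ) : ℝ) - i) = ((m : ℝ) + 1) := by
    intros; push_cast; ring
  rw [Finset.prod_congr rfl h1, show n - (i+1) = n - 1 - i by omega]
  exact_mod_cast congrArg (Nat.cast : ℕ → ℝ) (Finset.prod_range_add_one_eq_factorial (n - 1 - i))

private lemma prod_erase_range (n i : ℕ) (h : i < n) :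
    ∏ m ∈ (Finset.range n).erase i, ((m : ℝ) - i) = (-1) ^ i * i.factorial * (n - 1 - i).factorial := by
  have hset : (Finset.range n).erase i = Finset.range i ∪ Finset.Ico (i + 1) n := by
    ext m; simp only [Finset.mem_erase, Finset.mem_range, Finset.mem_union, Finset.mem_Ico]; omega
  have hdisj : Disjoint (Finset.range i) (Finset.Ico (i + 1) n) := by
    rw [Finset.disjoint_left]; intro a ha hb
    simp only [Finset.mem_range] at ha
    simp only [Finset.mem_Ico] at hb; omega
  rw [hset, Finset.prod_union hdisj, prod_low, prod_hi]

private lemma prod_erase_fin (n : ℕ) (i : Fin n) (F : ℕ → ℝ) :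
    ∏ m ∈ Finset.univ.erase i, F (m : ℕ) = ∏ m ∈ (Finset.range n).erase (i : ℕ), F m := by
  refine Finset.prod_bij (fun (m : Fin n) (_ : m ∈ Finset.univ.erase i) => (m : ℕ)) ?_ ?_ ?_ ?_
  · intro a ha
    simp only [Finset.mem_erase, Finset.mem_univ, and_true] at ha
    simp only [Finset.mem_erase, Finset.mem_range]
    exact ⟨fun hc => ha (Fin.ext hc), a.isLt⟩
  · intro a _ b _ hab
    exact Fin.ext hab
  · intro b hb
    simp only [Finset.mem_erase, Finset.mem_range] at hb
    exact ⟨⟨b, hb.2⟩, by simp [Finset.mem_erase, Fin.ext_iff, hb.1], rfl⟩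
  · intros; rfl

private lemma prod_erase_fin' (N : ℕ) (i : Fin (N + 1)) :
    ∏ m ∈ Finset.univ.erase i, (((m : ℕ) : ℝ) - ((i : ℕ) : ℝ)) =
      (-1) ^ (i : ℕ) * (i : ℕ).factorial * (N - (i : ℕ)).factorial := by
  rw [prod_erase_fin (N + 1) i (fun m => (m : ℝ) - ((i : ℕ) : ℝ)),
    prod_erase_range (N + 1) i i.isLt, show N + 1 - 1 - (i : ℕ) = N - (i : ℕ) by omega]

set_option maxHeartbeats 1600000

section
variable (N : ℕ) (i j : Fin (N + 1))

private lemma key_sum (s : ℝ) (hs : 0 < s) :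
    ∑ k : Fin (N + 1),
      ((-1 : ℝ) ^ ((i : ℕ) + (k : ℕ)) * s ^ ((i : ℕ) + (k : ℕ) + 1) /
          ((i : ℕ).factorial * (k : ℕ).factorial * ((i : ℕ) + (k : ℕ) + 1))) *
        (((k : ℕ).factorial * (j : ℕ).factorial * ((k : ℕ) + (j : ℕ) + 1) /
            s ^ ((k : ℕ) + (j : ℕ) + 1)) *
          ((N + 1 + (k : ℕ)).choose (N - (j : ℕ))) * ((N + 1 + (j : ℕ)).choose (N - (k : ℕ))) *
          (((k : ℕ) + (j : ℕ)).choose (k : ℕ)) ^ 2) = if i = j then 1 else 0 := by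
  classical
  set v : Fin (N + 1) → ℝ := fun k => ((k : ℕ) : ℝ) + 1 with hv_def
  set f : Polynomial ℝ := ∏ m ∈ Finset.univ.erase j, (X + C ((m : ℕ) : ℝ)) with hf_def
  set t : ℝ := -((i : ℕ) : ℝ) with ht_def
  have hv : Set.InjOn v ↑(Finset.univ : Finset (Fin (N + 1))) := by
    intro a _ b _ hab
    simp only [hv_def] at hab
    have h2 : (((a : ℕ) : ℝ)) = ((b : ℕ) : ℝ) := by linarith
    exact Fin.ext (by exact_mod_cast h2)
  have hdeg : f.degree < (Finset.univ : Finset (Fin (N + 1))).card := by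
    rw [hf_def, Polynomial.degree_prod]
    have : ∀ m ∈ Finset.univ.erase j, (X + C ((m : ℕ) : ℝ)).degree = 1 := fun m _ =>
      Polynomial.degree_X_add_C _
    rw [Finset.sum_congr rfl this, Finset.sum_const,
      Finset.card_erase_of_mem (Finset.mem_univ j), Finset.card_univ, Fintype.card_fin]
    simp only [nsmul_eq_mul, mul_one]
    exact_mod_cast Nat.lt_succ_self N
  -- master Lagrange identity
  have hmaster : ∑ k, f.eval (v k) * (Lagrange.basis Finset.univ v k).eval t = f.eval t := by
    conv_rhs => rw [Lagrange.eq_interpolate hv hdeg]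
    rw [Lagrange.interpolate_apply, Polynomial.eval_finset_sum]
    exact (Finset.sum_congr rfl fun k _ => by rw [Polynomial.eval_mul, Polynomial.eval_C]).symm
  -- evaluation of f at nodes
  have hfe : ∀ k : Fin (N + 1), f.eval (v k) =
      ((N + 1 + (k : ℕ)).factorial : ℝ) / ((k : ℕ).factorial * (((k : ℕ) : ℝ) + (j : ℕ) + 1)) := by
    intro k
    have h0 : f.eval (v k) = ∏ m ∈ Finset.univ.erase j, (((k : ℕ) : ℝ) + 1 + ((m : ℕ) : ℝ)) := by
      rw [hf_def, Polynomial.eval_prod]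
      exact Finset.prod_congr rfl fun m _ => by simp [hv_def]
    have hfull : ∏ m : Fin (N + 1), (((k : ℕ) : ℝ) + 1 + ((m : ℕ) : ℝ)) =
        ((N + 1 + (k : ℕ)).factorial : ℝ) / (k : ℕ).factorial := by
      rw [eq_div_iff (by positivity)]
      rw [Fin.prod_univ_eq_prod_range (fun m => ((k : ℕ) : ℝ) + 1 + (m : ℝ)) (N + 1)]
      rw [mul_comm]
      exact fact_prod (k : ℕ) (N + 1)
    have h1 : (((k : ℕ) : ℝ) + 1 + ((j : ℕ) : ℝ)) * ∏ m ∈ Finset.univ.erase j,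
        (((k : ℕ) : ℝ) + 1 + ((m : ℕ) : ℝ)) = ((N + 1 + (k : ℕ)).factorial : ℝ) / (k : ℕ).factorial := by
      rw [Finset.mul_prod_erase Finset.univ
        (fun m : Fin (N + 1) => ((k : ℕ) : ℝ) + 1 + ((m : ℕ) : ℝ)) (Finset.mem_univ j)]
      exact hfull
    rw [h0, eq_div_iff (by positivity)]
    rw [eq_div_iff (by positivity)] at h1
    linear_combination h1
  -- evaluation of the Lagrange basis at t
  have hB : ∀ k : Fin (N + 1), (Lagrange.basis Finset.univ v k).eval t =
      (-1 : ℝ) ^ (k : ℕ) * ((N + 1 + (i : ℕ)).factorial : ℝ) /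
        ((k : ℕ).factorial * ((N - (k : ℕ)).factorial : ℝ) * ((i : ℕ).factorial : ℝ) *
          (((i : ℕ) : ℝ) + ((k : ℕ) : ℝ) + 1)) := by
    intro k
    have hB0 : (Lagrange.basis Finset.univ v k).eval t =
        (∏ m ∈ Finset.univ.erase k, (v k - v m))⁻¹ * ∏ m ∈ Finset.univ.erase k, (t - v m) := by
      rw [Lagrange.basis, Polynomial.eval_prod, ← Finset.prod_inv_distrib,
        ← Finset.prod_mul_distrib]
      refine Finset.prod_congr rfl fun m _ => ?_
      simp [Lagrange.basisDivisor]
    have hcardk : (Finset.univ.erase k).card = N := by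
      rw [Finset.card_erase_of_mem (Finset.mem_univ k), Finset.card_univ, Fintype.card_fin]
      omega
    have hP1 : ∏ m ∈ Finset.univ.erase k, (v k - v m) =
        (-1 : ℝ) ^ N * ((-1 : ℝ) ^ (k : ℕ) * (k : ℕ).factorial * ((N - (k : ℕ)).factorial : ℝ)) := by
      have h2 : ∀ m ∈ Finset.univ.erase k, v k - v m =
          (-1 : ℝ) * (((m : ℕ) : ℝ) - ((k : ℕ) : ℝ)) := by
        intro m _; simp only [hv_def]; ring
      rw [Finset.prod_congr rfl h2, Finset.prod_mul_distrib, Finset.prod_const, hcardk,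
        prod_erase_fin' N k]
    have hP2 : ∏ m ∈ Finset.univ.erase k, (t - v m) =
        (-1 : ℝ) ^ (N + 1) * (((N + 1 + (i : ℕ)).factorial : ℝ) / ((i : ℕ).factorial : ℝ)) /
          (-(((i : ℕ) : ℝ) + ((k : ℕ) : ℝ) + 1)) := by
      have htk : t - v k = -(((i : ℕ) : ℝ) + ((k : ℕ) : ℝ) + 1) := by
        simp only [ht_def, hv_def]; ring
      have hfull2 : ∏ m : Fin (N + 1), (t - v m) =
          (-1 : ℝ) ^ (N + 1) * (((N + 1 + (i : ℕ)).factorial : ℝ) / ((i : ℕ).factorial : ℝ)) := by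
        have h2 : ∀ m ∈ (Finset.univ : Finset (Fin (N + 1))), t - v m =
            (-1 : ℝ) * (((i : ℕ) : ℝ) + 1 + ((m : ℕ) : ℝ)) := by
          intro m _; simp only [ht_def, hv_def]; ring
        rw [Finset.prod_congr rfl h2, Finset.prod_mul_distrib, Finset.prod_const,
          Finset.card_univ, Fintype.card_fin]
        congr 1
        rw [eq_div_iff (by positivity),
          Fin.prod_univ_eq_prod_range (fun m => ((i : ℕ) : ℝ) + 1 + (m : ℝ)) (N + 1), mul_comm]
        exact fact_prod (i : ℕ) (N + 1)
      have h3 := Finset.mul_prod_erase Finset.univ (fun m => t - v m) (Finset.mem_univ k)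
      rw [hfull2, htk] at h3
      rw [eq_div_iff (neg_ne_zero.mpr (by positivity))]
      linear_combination h3
    rw [hB0, hP1, hP2, pow_succ]
    have hik : (0:ℝ) < ((i : ℕ) : ℝ) + ((k : ℕ) : ℝ) + 1 := by positivity
    have q1 : ((k : ℕ).factorial : ℝ) ≠ 0 := Nat.cast_ne_zero.mpr (Nat.factorial_ne_zero _)
    have q2 : ((N - (k : ℕ)).factorial : ℝ) ≠ 0 := Nat.cast_ne_zero.mpr (Nat.factorial_ne_zero _)
    have q3 : ((i : ℕ).factorial : ℝ) ≠ 0 := Nat.cast_ne_zero.mpr (Nat.factorial_ne_zero _)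
    have q4 : (((i : ℕ) : ℝ) + ((k : ℕ) : ℝ) + 1) ≠ 0 := ne_of_gt hik
    have hx : -(((i : ℕ) : ℝ) + ((k : ℕ) : ℝ) + 1) ≠ 0 := neg_ne_zero.mpr q4
    rcases Nat.even_or_odd N with hN | hN <;> rcases Nat.even_or_odd (k : ℕ) with hk | hk <;>
      rw [hN.neg_one_pow, hk.neg_one_pow] <;>
      rw [inv_mul_eq_div, div_div,
        div_eq_div_iff
          (by simp [mul_ne_zero_iff, neg_ne_zero, q1, q2, q3, q4] <;>
            (intro hc; exact q4 (by linarith)))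
          (by simp [mul_ne_zero_iff, neg_ne_zero, q1, q2, q3, q4] <;>
            (intro hc; exact q4 (by linarith)))] <;>
      field_simp <;> ring
  -- evaluation of f at t
  have hft : f.eval t = if i = j then
      ((-1 : ℝ) ^ (i : ℕ) * (i : ℕ).factorial * ((N - (i : ℕ)).factorial : ℝ)) else 0 := by
    have h0 : f.eval t = ∏ m ∈ Finset.univ.erase j, (((m : ℕ) : ℝ) - ((i : ℕ) : ℝ)) := by
      rw [hf_def, Polynomial.eval_prod]
      refine Finset.prod_congr rfl fun m _ => ?_
      simp only [ht_def, Polynomial.eval_add, Polynomial.eval_X, Polynomial.eval_C]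
      ring
    rw [h0]
    split_ifs with hij
    · subst hij
      exact prod_erase_fin' N i
    · refine Finset.prod_eq_zero (Finset.mem_erase.mpr ⟨hij, Finset.mem_univ i⟩) ?_
      simp
  -- the constant
  set e : ℝ := (-1 : ℝ) ^ (i : ℕ) * s ^ ((i : ℕ) + 1) * ((N + 1 + (j : ℕ)).factorial : ℝ) /
      (s ^ ((j : ℕ) + 1) * ((N - (j : ℕ)).factorial : ℝ) * ((j : ℕ).factorial : ℝ) *
        ((N + 1 + (i : ℕ)).factorial : ℝ)) with he_def
  have hs' : s ≠ 0 := ne_of_gt hs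
  have hterm : ∀ k : Fin (N + 1),
      ((-1 : ℝ) ^ ((i : ℕ) + (k : ℕ)) * s ^ ((i : ℕ) + (k : ℕ) + 1) /
          ((i : ℕ).factorial * (k : ℕ).factorial * ((i : ℕ) + (k : ℕ) + 1))) *
        (((k : ℕ).factorial * (j : ℕ).factorial * ((k : ℕ) + (j : ℕ) + 1) /
            s ^ ((k : ℕ) + (j : ℕ) + 1)) *
          ((N + 1 + (k : ℕ)).choose (N - (j : ℕ))) * ((N + 1 + (j : ℕ)).choose (N - (k : ℕ))) *
          (((k : ℕ) + (j : ℕ)).choose (k : ℕ)) ^ 2) =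
      e * (f.eval (v k) * (Lagrange.basis Finset.univ v k).eval t) := by
    intro k
    have hkN : (k : ℕ) ≤ N := Nat.lt_succ_iff.mp k.isLt
    have hjN : (j : ℕ) ≤ N := Nat.lt_succ_iff.mp j.isLt
    have c1 : (((N + 1 + (k : ℕ)).choose (N - (j : ℕ))) : ℝ) =
        ((N + 1 + (k : ℕ)).factorial : ℝ) /
          (((N - (j : ℕ)).factorial : ℝ) * (((k : ℕ) + (j : ℕ) + 1).factorial : ℝ)) := by
      rw [Nat.cast_choose ℝ (by omega : N - (j : ℕ) ≤ N + 1 + (k : ℕ)),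
        show N + 1 + (k : ℕ) - (N - (j : ℕ)) = (k : ℕ) + (j : ℕ) + 1 by omega]
    have c2 : (((N + 1 + (j : ℕ)).choose (N - (k : ℕ))) : ℝ) =
        ((N + 1 + (j : ℕ)).factorial : ℝ) /
          (((N - (k : ℕ)).factorial : ℝ) * (((k : ℕ) + (j : ℕ) + 1).factorial : ℝ)) := by
      rw [Nat.cast_choose ℝ (by omega : N - (k : ℕ) ≤ N + 1 + (j : ℕ)),
        show N + 1 + (j : ℕ) - (N - (k : ℕ)) = (k : ℕ) + (j : ℕ) + 1 by omega]
    have c3 : ((((k : ℕ) + (j : ℕ)).choose (k : ℕ)) : ℝ) =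
        ((((k : ℕ) + (j : ℕ)).factorial : ℝ)) /
          (((k : ℕ).factorial : ℝ) * ((j : ℕ).factorial : ℝ)) := by
      rw [Nat.cast_choose ℝ (by omega : (k : ℕ) ≤ (k : ℕ) + (j : ℕ)),
        show (k : ℕ) + (j : ℕ) - (k : ℕ) = (j : ℕ) by omega]
    have c4 : (((k : ℕ) + (j : ℕ) + 1).factorial : ℝ) =
        (((k : ℕ) : ℝ) + ((j : ℕ) : ℝ) + 1) * (((k : ℕ) + (j : ℕ)).factorial : ℝ) := by
      rw [Nat.factorial_succ]; push_cast; ring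
    rw [hfe k, hB k, c1, c2, c3, c4, he_def]
    have q1 : ((k : ℕ).factorial : ℝ) ≠ 0 := Nat.cast_ne_zero.mpr (Nat.factorial_ne_zero _)
    have q2 : ((N - (k : ℕ)).factorial : ℝ) ≠ 0 := Nat.cast_ne_zero.mpr (Nat.factorial_ne_zero _)
    have q3 : ((i : ℕ).factorial : ℝ) ≠ 0 := Nat.cast_ne_zero.mpr (Nat.factorial_ne_zero _)
    have q5 : ((j : ℕ).factorial : ℝ) ≠ 0 := Nat.cast_ne_zero.mpr (Nat.factorial_ne_zero _)
    have q6 : ((N - (j : ℕ)).factorial : ℝ) ≠ 0 := Nat.cast_ne_zero.mpr (Nat.factorial_ne_zero _)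
    have q7 : (((k : ℕ) + (j : ℕ)).factorial : ℝ) ≠ 0 := Nat.cast_ne_zero.mpr (Nat.factorial_ne_zero _)
    have q8 : ((N + 1 + (k : ℕ)).factorial : ℝ) ≠ 0 := Nat.cast_ne_zero.mpr (Nat.factorial_ne_zero _)
    have q9 : ((N + 1 + (j : ℕ)).factorial : ℝ) ≠ 0 := Nat.cast_ne_zero.mpr (Nat.factorial_ne_zero _)
    have q10 : ((N + 1 + (i : ℕ)).factorial : ℝ) ≠ 0 := Nat.cast_ne_zero.mpr (Nat.factorial_ne_zero _)
    have q4 : (((i : ℕ) : ℝ) + ((k : ℕ) : ℝ) + 1) ≠ 0 := by positivity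
    have q11 : (((k : ℕ) : ℝ) + ((j : ℕ) : ℝ) + 1) ≠ 0 := by positivity
    have hpow : ((-1 : ℝ)) ^ ((i : ℕ) + (k : ℕ)) = (-1 : ℝ) ^ (i : ℕ) * (-1 : ℝ) ^ (k : ℕ) :=
      pow_add _ _ _
    have hpows1 : s ^ ((i : ℕ) + (k : ℕ) + 1) = s ^ (i : ℕ) * s ^ (k : ℕ) * s := by
      rw [pow_add, pow_add, pow_one]
    have hpows2 : s ^ ((k : ℕ) + (j : ℕ) + 1) = s ^ (k : ℕ) * s ^ (j : ℕ) * s := by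
      rw [pow_add, pow_add, pow_one]
    have hpows3 : s ^ ((i : ℕ) + 1) = s ^ (i : ℕ) * s := by rw [pow_add, pow_one]
    have hpows4 : s ^ ((j : ℕ) + 1) = s ^ (j : ℕ) * s := by rw [pow_add, pow_one]
    rw [hpow, hpows1, hpows2, hpows3, hpows4]
    push_cast
    field_simp
  rw [Finset.sum_congr rfl fun k _ => hterm k, ← Finset.mul_sum, hmaster, hft]
  split_ifs with hij
  · subst hij
    rw [he_def]
    have q3 : ((i : ℕ).factorial : ℝ) ≠ 0 := Nat.cast_ne_zero.mpr (Nat.factorial_ne_zero _)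
    have q6 : ((N - (i : ℕ)).factorial : ℝ) ≠ 0 := Nat.cast_ne_zero.mpr (Nat.factorial_ne_zero _)
    have q10 : ((N + 1 + (i : ℕ)).factorial : ℝ) ≠ 0 := Nat.cast_ne_zero.mpr (Nat.factorial_ne_zero _)
    rcases Nat.even_or_odd (i : ℕ) with hi | hi <;> rw [hi.neg_one_pow] <;> field_simp <;> ring
  · rw [mul_zero]
end

theorem stmt6 (N : ℕ) (t₀ t₁ : ℝ) (h : t₀ < t₁)
    (W : Matrix (Fin (N + 1)) (Fin (N + 1)) ℝ)
    (hW : ∀ i j : Fin (N + 1), W i j =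
      -(t₀ - t₁) ^ ((i : ℕ) + (j : ℕ) + 1) /
        ((i : ℕ).factorial * (j : ℕ).factorial * ((i : ℕ) + (j : ℕ) + 1))) :
    IsUnit W.det ∧
      ∀ i j : Fin (N + 1), W⁻¹ i j =
        ((i : ℕ).factorial * (j : ℕ).factorial * ((i : ℕ) + (j : ℕ) + 1) /
            (t₁ - t₀) ^ ((i : ℕ) + (j : ℕ) + 1)) *
          (Nat.choose (N + 1 + i) (N - j)) * (Nat.choose (N + 1 + j) (N - i)) *
          (Nat.choose ((i : ℕ) + (j : ℕ)) i) ^ 2 := by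
  have hs : (0 : ℝ) < t₁ - t₀ := sub_pos.mpr h
  set V : Matrix (Fin (N + 1)) (Fin (N + 1)) ℝ := fun i j =>
    ((i : ℕ).factorial * (j : ℕ).factorial * ((i : ℕ) + (j : ℕ) + 1) /
        (t₁ - t₀) ^ ((i : ℕ) + (j : ℕ) + 1)) *
      (Nat.choose (N + 1 + i) (N - j)) * (Nat.choose (N + 1 + j) (N - i)) *
      (Nat.choose ((i : ℕ) + (j : ℕ)) i) ^ 2 with hV_def
  have hmul : W * V = 1 := by
    ext i j
    rw [Matrix.mul_apply, Matrix.one_apply, ← key_sum N i j (t₁ - t₀) hs]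
    refine Finset.sum_congr rfl fun k _ => ?_
    rw [hW i k]
    have hneg : -(t₀ - t₁) ^ ((i : ℕ) + (k : ℕ) + 1) =
        (-1 : ℝ) ^ ((i : ℕ) + (k : ℕ)) * (t₁ - t₀) ^ ((i : ℕ) + (k : ℕ) + 1) := by
      rw [show t₀ - t₁ = -(t₁ - t₀) by ring, neg_pow, pow_succ]
      ring
    rw [hneg]
  exact ⟨Matrix.isUnit_det_of_right_inverse hmul, fun i j => by
    rw [Matrix.inv_eq_right_inv hmul]⟩
end

section
/- The (N+1)×(N+1) Hilbert matrix H, with entries H i j = 1/(i+j+1) (0-based indices), is invertible, and its inverse has entries (H⁻¹) i j = (-1)^(i+j) · (i+j+1) · C(N+1+i, N-j) · C(N+1+j, N-i) · C(i+j, i)². -/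
open Finset Nat Polynomial




-- product lemmas
lemma prodFact (n : ℕ) : ∏ m ∈ range n, ((m:ℝ)+1) = (n ! : ℝ) := by
  induction n with
  | zero => simp
  | succ n ih => rw [prod_range_succ, ih, Nat.factorial_succ]; push_cast; ring

lemma prodAsc (a n : ℕ) : ∏ m ∈ range n, ((a:ℝ)+m+1) = ((a+n)! : ℝ) / (a ! : ℝ) := by
  induction n with
  | zero => simp [div_self (Nat.cast_ne_zero.mpr a.factorial_ne_zero : (a ! : ℝ) ≠ 0)]
  | succ n ih =>
      rw [prod_range_succ, ih, show a+(n+1) = (a+n)+1 by ring, Nat.factorial_succ]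
      have : (a ! : ℝ) ≠ 0 := Nat.cast_ne_zero.mpr (Nat.factorial_ne_zero a)
      field_simp
      push_cast; ring

lemma eraseSplit (k N : ℕ) (hk : k ≤ N) :
    (range (N+1)).erase k = range k ∪ Ico (k+1) (N+1) := by
  ext m; simp [mem_erase, mem_range, mem_Ico]; omega

lemma prodDown (k : ℕ) : ∏ m ∈ range k, ((k:ℝ) - m) = (k ! : ℝ) := by
  have h := prod_range_reflect (fun m => ((m:ℝ)+1)) k
  rw [prodFact] at h
  rw [← h]
  apply prod_congr rfl
  intro m hm
  rw [mem_range] at hm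
  have : (k - 1 - m : ℕ) = k - (m+1) := by omega
  rw [this, Nat.cast_sub (by omega)]
  push_cast; ring

lemma prodNeg (t : ℕ) : ∏ r ∈ range t, (-((r:ℝ)+1)) = (-1)^t * (t ! : ℝ) := by
  have h : ∀ r ∈ range t, (-((r:ℝ)+1)) = (-1) * ((r:ℝ)+1) := by intro r _; ring
  rw [prod_congr rfl h, prod_mul_distrib, prod_const, prodFact, card_range]

lemma prod2 (k N : ℕ) (hk : k ≤ N) :
    ∏ m ∈ (range (N+1)).erase k, ((k:ℝ) - m) = (-1)^(N-k) * (k ! : ℝ) * ((N-k)! : ℝ) := by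
  rw [eraseSplit k N hk, prod_union (by simp [disjoint_left, mem_Ico]; omega), prodDown]
  rw [prod_Ico_eq_prod_range]
  have h2 : ∀ r ∈ range (N+1-(k+1)), ((k:ℝ) - ((k+1+r : ℕ) : ℝ)) = -((r:ℝ)+1) := by
    intro r _; push_cast; ring
  rw [prod_congr rfl h2, prodNeg, show N+1-(k+1) = N-k by omega]
  ring

lemma prod3 (i N : ℕ) (hi : i ≤ N) :
    ∏ m ∈ (range (N+1)).erase i, ((m:ℝ) - i) = (-1)^i * (i ! : ℝ) * ((N-i)! : ℝ) := by
  rw [eraseSplit i N hi, prod_union (by simp [disjoint_left, mem_Ico]; omega)]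
  have h1 : ∀ m ∈ range i, ((m:ℝ) - i) = (-1) * ((i:ℝ)-m) := by intro m _; ring
  rw [prod_congr rfl h1, prod_mul_distrib, prod_const, prodDown, card_range,
    prod_Ico_eq_prod_range]
  have h2 : ∀ r ∈ range (N+1-(i+1)), (((i+1+r : ℕ) : ℝ) - i) = ((r:ℝ)+1) := by
    intro r _; push_cast; ring
  rw [prod_congr rfl h2, prodFact, show N+1-(i+1) = N-i by omega]



noncomputable def Mp (N i k : ℕ) : ℝ :=
  (∏ m ∈ (range (N+1)).erase i, ((m:ℝ) - i))⁻¹ *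
  ((∏ m ∈ (range (N+1)).erase k, (((k:ℝ) - m)⁻¹ * (-((i:ℝ)+1) - m))) *
   ∏ m ∈ range (N+1), ((k:ℝ)+m+1))

lemma interp (N i j : ℕ) (hi : i ≤ N) (hj : j ≤ N) :
    ∏ m ∈ (range (N+1)).erase j, (-((i:ℝ)+1) + (m+1)) =
    ∑ k ∈ range (N+1), (∏ m ∈ (range (N+1)).erase j, ((k:ℝ) + (m+1))) *
      ∏ m ∈ (range (N+1)).erase k, (((k:ℝ) - m)⁻¹ * (-((i:ℝ)+1) - m)) := by
  have hvs : Set.InjOn (fun n : ℕ => (n:ℝ)) (range (N+1)) :=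
    fun a _ b _ h => Nat.cast_injective h
  set f : Polynomial ℝ := ∏ m ∈ (range (N+1)).erase j, (X + C ((m:ℝ)+1)) with hf
  have hdeg : f.degree < ((range (N+1)).card : ℕ) := by
    rw [hf, degree_prod]
    have : ∀ m ∈ (range (N+1)).erase j, (X + C ((m:ℝ)+1)).degree = 1 := by
      intro m _
      simpa using degree_X_add_C ((m:ℝ)+1)
    rw [Finset.sum_congr rfl this, Finset.sum_const, card_erase_of_mem (by simp; omega),
      card_range]
    simp
    exact_mod_cast Nat.lt_succ_self N
  have h := Lagrange.eq_interpolate hvs hdeg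
  have h2 := congrArg (Polynomial.eval (-((i:ℝ)+1))) h
  simpa [hf, Lagrange.interpolate_apply, Lagrange.basis, Lagrange.basisDivisor,
    Polynomial.eval_finset_sum, Polynomial.eval_prod, mul_comm] using h2




lemma key (N i j : ℕ) (hi : i ≤ N) (hj : j ≤ N) :
    ∑ k ∈ range (N+1), Mp N i k * (1/((k:ℝ)+(j:ℝ)+1)) = if i = j then 1 else 0 := by
  have hD : (∏ m ∈ (range (N+1)).erase i, ((m:ℝ) - i)) ≠ 0 := by
    rw [Finset.prod_ne_zero_iff]
    intro m hm
    have : m ≠ i := (Finset.mem_erase.mp hm).1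
    have : (m:ℝ) ≠ i := by exact_mod_cast this
    exact sub_ne_zero.mpr this
  have hterm : ∀ k ∈ range (N+1), Mp N i k * (1/((k:ℝ)+(j:ℝ)+1)) =
      (∏ m ∈ (range (N+1)).erase i, ((m:ℝ) - i))⁻¹ *
      ((∏ m ∈ (range (N+1)).erase j, ((k:ℝ) + (m+1))) *
        ∏ m ∈ (range (N+1)).erase k, (((k:ℝ) - m)⁻¹ * (-((i:ℝ)+1) - m))) := by
    intro k _
    have hjm : j ∈ range (N+1) := by simp; omega
    have hsplit : ∏ m ∈ range (N+1), ((k:ℝ)+m+1) =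
        ((k:ℝ)+j+1) * ∏ m ∈ (range (N+1)).erase j, ((k:ℝ)+m+1) :=
      (Finset.mul_prod_erase _ _ hjm).symm
    have hkj : ((k:ℝ)+j+1) ≠ 0 := by positivity
    have : ∏ m ∈ (range (N+1)).erase j, ((k:ℝ)+(m+1)) =
        ∏ m ∈ (range (N+1)).erase j, ((k:ℝ)+m+1) := by
      apply prod_congr rfl; intro m _; ring
    rw [Mp, hsplit, this]
    have habs : ∀ (d p2 pj c : ℝ), c ≠ 0 → d * (p2 * (c * pj)) * (1/c) = d * (pj * p2) := by
      intros d p2 pj c hc; field_simp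
    exact habs _ _ _ _ hkj
  rw [Finset.sum_congr rfl hterm, ← Finset.mul_sum, ← interp N i j hi hj]
  by_cases hij : i = j
  · subst hij
    simp only [if_pos rfl]
    have : ∏ m ∈ (range (N+1)).erase i, (-((i:ℝ)+1) + (m+1)) =
        ∏ m ∈ (range (N+1)).erase i, ((m:ℝ) - i) := by
      apply prod_congr rfl; intro m _; ring
    rw [this, inv_mul_cancel₀ hD]; simp
  · rw [if_neg hij]
    have him : i ∈ (range (N+1)).erase j := by
      rw [Finset.mem_erase]; constructor; exact hij; simp; omega
    rw [Finset.prod_eq_zero him (by ring), mul_zero]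




lemma neg_one_pow_sub {k n : ℕ} (h : k ≤ n) : (-1:ℝ)^(n-k) = (-1)^n * (-1)^k := by
  have h1 : (-1:ℝ)^(n-k) * (-1)^k = (-1)^n := by rw [← pow_add, Nat.sub_add_cancel h]
  have h2 : ((-1:ℝ)^k) * ((-1)^k) = 1 := by rw [← pow_add]; exact Even.neg_one_pow ⟨k, rfl⟩
  calc (-1:ℝ)^(n-k) = (-1)^(n-k) * ((-1)^k * (-1)^k) := by rw [h2, mul_one]
  _ = ((-1)^(n-k) * (-1)^k) * (-1)^k := by ring
  _ = (-1)^n * (-1)^k := by rw [h1]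

lemma Mp_closed (N i k : ℕ) (hi : i ≤ N) (hk : k ≤ N) :
    Mp N i k = (-1:ℝ)^(i+k) * ((N+1+i)! : ℝ) * ((N+1+k)! : ℝ) /
      ((i ! : ℝ)^2 * (k ! : ℝ)^2 * ((N-i)! : ℝ) * ((N-k)! : ℝ) * ((i:ℝ)+(k:ℝ)+1)) := by
  have hik : ((i:ℝ)+(k:ℝ)+1) ≠ 0 := by positivity
  have hkm : k ∈ range (N+1) := by simp; omega
  have e1 : ∏ m ∈ (range (N+1)).erase k, ((i:ℝ)+m+1) =
      (((N+1+i)! : ℝ)/(i ! : ℝ))/((i:ℝ)+(k:ℝ)+1) := by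
    have h := Finset.mul_prod_erase (range (N+1)) (fun m => (i:ℝ)+m+1) hkm
    rw [prodAsc, show i+(N+1) = N+1+i by omega] at h
    rw [eq_div_iff hik, mul_comm]
    simpa using h
  have e2 : ∏ m ∈ (range (N+1)).erase k, (((k:ℝ) - m)⁻¹ * (-((i:ℝ)+1) - m))
      = ((-1:ℝ)^(N-k) * (k ! : ℝ) * ((N-k)! : ℝ))⁻¹ *
        ((-1:ℝ)^N * ((((N+1+i)! : ℝ)/(i ! : ℝ))/((i:ℝ)+(k:ℝ)+1))) := by
    rw [prod_mul_distrib, prod_inv_distrib, prod2 k N hk]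
    congr 1
    have hc : ∀ m ∈ (range (N+1)).erase k, (-((i:ℝ)+1) - m) = (-1) * ((i:ℝ)+m+1) := by
      intro m _; ring
    rw [prod_congr rfl hc, prod_mul_distrib, prod_const, card_erase_of_mem hkm, card_range,
      e1]
    norm_num
  rw [Mp, prod3 i N hi, e2, prodAsc k (N+1), show k+(N+1) = N+1+k by omega,
    neg_one_pow_sub hk, pow_add (-1:ℝ) i k]
  have hfi : (i ! : ℝ) ≠ 0 := Nat.cast_ne_zero.mpr (Nat.factorial_ne_zero i)
  have hfk : (k ! : ℝ) ≠ 0 := Nat.cast_ne_zero.mpr (Nat.factorial_ne_zero k)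
  have hgi : ((N-i)! : ℝ) ≠ 0 := Nat.cast_ne_zero.mpr (Nat.factorial_ne_zero _)
  have hgk : ((N-k)! : ℝ) ≠ 0 := Nat.cast_ne_zero.mpr (Nat.factorial_ne_zero _)
  have habs : ∀ (a b c fi fk gi gk A B x : ℝ), a*a = 1 → b*b = 1 → c*c = 1 →
      fi ≠ 0 → fk ≠ 0 → gi ≠ 0 → gk ≠ 0 → x ≠ 0 →
      (a * fi * gi)⁻¹ * ((c * b * fk * gk)⁻¹ * (c * ((A/fi)/x)) * (B/fk)) =
      (a*b) * A * B / (fi^2 * fk^2 * gi * gk * x) := by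
    intro a b c fi fk gi gk A B x ha hb hc hfi hfk hgi hgk hx
    have ia : (a * fi * gi)⁻¹ = a * (fi⁻¹ * gi⁻¹) := by
      rw [mul_inv, mul_inv, inv_eq_of_mul_eq_one_right ha]; ring
    have ib : (c * b * fk * gk)⁻¹ = c * b * (fk⁻¹ * gk⁻¹) := by
      rw [mul_inv, mul_inv, mul_inv, inv_eq_of_mul_eq_one_right hc,
        inv_eq_of_mul_eq_one_right hb]; ring
    rw [ia, ib]
    have : ∀ y : ℝ, y*y = 1 → ∀ z : ℝ, y * (y * z) = z := by
      intro y hy z; rw [← mul_assoc, hy, one_mul]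
    field_simp
    linear_combination (a * b * A * B) * hc
  exact habs _ _ _ _ _ _ _ _ _ _
    (by rw [← pow_add]; exact Even.neg_one_pow ⟨i, rfl⟩)
    (by rw [← pow_add]; exact Even.neg_one_pow ⟨k, rfl⟩)
    (by rw [← pow_add]; exact Even.neg_one_pow ⟨N, rfl⟩)
    hfi hfk hgi hgk hik

lemma B_closed (N i k : ℕ) (hi : i ≤ N) (hk : k ≤ N) :
    (-1:ℝ)^(i+k) * ((i:ℝ)+(k:ℝ)+1) * ((N+1+i).choose (N-k) : ℝ) *
      ((N+1+k).choose (N-i) : ℝ) * (((i+k).choose i : ℝ))^2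
    = (-1:ℝ)^(i+k) * ((N+1+i)! : ℝ) * ((N+1+k)! : ℝ) /
      ((i ! : ℝ)^2 * (k ! : ℝ)^2 * ((N-i)! : ℝ) * ((N-k)! : ℝ) * ((i:ℝ)+(k:ℝ)+1)) := by
  rw [Nat.cast_choose ℝ (show N-k ≤ N+1+i by omega),
    Nat.cast_choose ℝ (show N-i ≤ N+1+k by omega),
    Nat.cast_choose ℝ (show i ≤ i+k by omega),
    show N+1+i-(N-k) = (i+k)+1 by omega, show N+1+k-(N-i) = (i+k)+1 by omega,
    show i+k-i = k by omega, Nat.factorial_succ (i+k)]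
  have h1 : (i ! : ℝ) ≠ 0 := Nat.cast_ne_zero.mpr (Nat.factorial_ne_zero i)
  have h2 : (k ! : ℝ) ≠ 0 := Nat.cast_ne_zero.mpr (Nat.factorial_ne_zero k)
  have h3 : ((N-i)! : ℝ) ≠ 0 := Nat.cast_ne_zero.mpr (Nat.factorial_ne_zero _)
  have h4 : ((N-k)! : ℝ) ≠ 0 := Nat.cast_ne_zero.mpr (Nat.factorial_ne_zero _)
  have h5 : (((i+k)!) : ℝ) ≠ 0 := Nat.cast_ne_zero.mpr (Nat.factorial_ne_zero _)
  have h6 : ((i:ℝ)+(k:ℝ)+1) ≠ 0 := by positivity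
  push_cast
  field_simp


theorem stmt7 (N : ℕ) (H : Matrix (Fin (N + 1)) (Fin (N + 1)) ℝ)
    (hH : ∀ i j : Fin (N + 1), H i j = 1 / ((i : ℝ) + (j : ℝ) + 1)) :
    IsUnit H.det ∧
      ∀ i j : Fin (N + 1), H⁻¹ i j =
        (-1 : ℝ) ^ ((i : ℕ) + (j : ℕ)) * ((i : ℕ) + (j : ℕ) + 1) *
          (Nat.choose (N + 1 + i) (N - j)) * (Nat.choose (N + 1 + j) (N - i)) *
          (Nat.choose ((i : ℕ) + (j : ℕ)) i) ^ 2 := by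
  classical
  set M : Matrix (Fin (N+1)) (Fin (N+1)) ℝ := fun i j => Mp N (i:ℕ) (j:ℕ) with hM
  have hMH : M * H = 1 := by
    ext i j
    rw [Matrix.mul_apply]
    have hc : ∀ k : Fin (N+1), M i k * H k j =
        (fun k : ℕ => Mp N (i:ℕ) k * (1/((k:ℝ)+((j:ℕ):ℝ)+1))) (k:ℕ) := by
      intro k; rw [hH]
    rw [Finset.sum_congr rfl (fun k _ => hc k),
      Fin.sum_univ_eq_sum_range (fun k : ℕ => Mp N (i:ℕ) k * (1/((k:ℝ)+((j:ℕ):ℝ)+1))) (N+1),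
      key N i j (Fin.is_le i) (Fin.is_le j)]
    simp [Matrix.one_apply, Fin.val_eq_val]
  have hMsym : M.transpose = M := by
    ext i j
    show Mp N (j:ℕ) (i:ℕ) = Mp N (i:ℕ) (j:ℕ)
    rw [Mp_closed N (j:ℕ) (i:ℕ) (Fin.is_le j) (Fin.is_le i),
      Mp_closed N (i:ℕ) (j:ℕ) (Fin.is_le i) (Fin.is_le j), Nat.add_comm (j:ℕ) (i:ℕ)]
    ring
  have hHsym : H.transpose = H := by
    ext i j
    rw [Matrix.transpose_apply, hH, hH]
    ring_nf
  have hHM : H * M = 1 := by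
    have h := Matrix.transpose_mul M H
    rw [hMH, Matrix.transpose_one, hMsym, hHsym] at h
    exact h.symm
  refine ⟨Matrix.isUnit_det_of_left_inverse hMH, fun i j => ?_⟩
  rw [Matrix.inv_eq_left_inv hMH]
  show Mp N (i:ℕ) (j:ℕ) = _
  rw [Mp_closed N (i:ℕ) (j:ℕ) (Fin.is_le i) (Fin.is_le j),
    ← B_closed N (i:ℕ) (j:ℕ) (Fin.is_le i) (Fin.is_le j)]
end

section
/- Let y(t) = Σ_{i=0}^{N} (aᵢ/i!)·tⁱ be a polynomial of degree at most N. For T > 0, t ≥ T, and 0 ≤ j ≤ N, the convolution ∫₀^T G_j(T,σ)·y(t-σ) dσ equals the j-th derivative y^{(j)}(t), where G_j(T,σ) = ((N+j+1)!/(T^{j+1}·j!·(N-j)!)) · Σ_{k=0}^{N} ((-1)^k·(N+k+1)!/((j+k+1)·(N-k)!·(k!)²)) · (σ/T)^k. -/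
open Finset Polynomial intervalIntegral MeasureTheory

theorem pascalP (n : ℕ) (f : ℕ → ℝ) :
    ∑ k ∈ range (n+2), (-1:ℝ)^k * (n+1).choose k * f k
      = ∑ k ∈ range (n+1), (-1:ℝ)^k * n.choose k * (f k - f (k+1)) := by
  have h1 : ∑ k ∈ range (n+2), (-1:ℝ)^k * (n+1).choose k * f k
      = (∑ k ∈ range (n+1), (-1:ℝ)^(k+1) * (n+1).choose (k+1) * f (k+1)) + f 0 := by
    rw [Finset.sum_range_succ' (fun k => (-1:ℝ)^k * (n+1).choose k * f k) (n+1)]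
    simp
  have h2 : ∀ k, (-1:ℝ)^(k+1) * ((n+1).choose (k+1) : ℝ) * f (k+1)
      = -((-1:ℝ)^k * n.choose k * f (k+1)) + -((-1:ℝ)^k * n.choose (k+1) * f (k+1)) := by
    intro k; rw [Nat.choose_succ_succ]; push_cast; ring
  rw [h1]; simp_rw [h2, Finset.sum_add_distrib, mul_sub, Finset.sum_sub_distrib]
  rw [Finset.sum_range_succ' (fun k => (-1:ℝ)^k * n.choose k * f k) n]
  rw [Finset.sum_range_succ (fun k => -((-1:ℝ)^k * n.choose (k+1) * f (k+1))) n]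
  simp only [Nat.choose_succ_self, Nat.cast_zero, mul_zero, zero_mul, neg_zero, add_zero,
    Nat.choose_zero_right, Nat.cast_one, pow_zero, one_mul, mul_one]
  have h3 : ∀ k, (-1:ℝ)^(k+1) * n.choose (k+1) * f (k+1)
      = (-((-1:ℝ)^k * n.choose (k+1) * f (k+1))) * 1 := by intro k; ring
  simp_rw [h3]
  simp only [mul_one, Finset.sum_neg_distrib]; ring

theorem altsum_poly (n : ℕ) (p : ℝ[X]) (hp : p.degree < n) :
    ∑ k ∈ range (n+1), (-1:ℝ)^k * n.choose k * p.eval (k:ℝ) = 0 := by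
  induction n generalizing p with
  | zero =>
    have hp0 : p = 0 := by
      by_contra h
      exact absurd hp (not_lt.mpr (by simpa using Polynomial.zero_le_degree_iff.mpr h))
    simp [hp0]
  | succ n ih =>
    by_cases hp0 : p = 0
    · simp [hp0]
    set q : ℝ[X] := p - p.comp (X + C 1) with hq
    have hlc : (p.comp (X + C 1)).leadingCoeff = p.leadingCoeff := by
      rw [Polynomial.leadingCoeff_comp (by rw [natDegree_X_add_C]; exact one_ne_zero)]
      rw [(monic_X_add_C (1:ℝ)).leadingCoeff, one_pow, mul_one]
    have hc0 : p.comp (X + C 1) ≠ 0 := by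
      rw [← Polynomial.leadingCoeff_ne_zero, hlc, Polynomial.leadingCoeff_ne_zero]
      exact hp0
    have hdc : (p.comp (X + C 1)).degree = p.degree := by
      rw [Polynomial.degree_eq_natDegree hc0, Polynomial.degree_eq_natDegree hp0,
        Polynomial.natDegree_comp, natDegree_X_add_C, mul_one]
    have hdq : q.degree < (n : WithBot ℕ) := by
      have h1 : q.degree < p.degree := Polynomial.degree_sub_lt hdc.symm hp0 hlc.symm
      have h2 : p.degree ≤ (n : WithBot ℕ) := by
        have := (Polynomial.natDegree_lt_iff_degree_lt hp0).mpr hp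
        rw [Polynomial.degree_eq_natDegree hp0]
        exact_mod_cast (by omega : p.natDegree ≤ n)
      exact lt_of_lt_of_le h1 h2
    have heq : ∀ k : ℕ, q.eval (k:ℝ) = p.eval (k:ℝ) - p.eval ((k:ℝ)+1) := by
      intro k; simp [hq, Polynomial.eval_comp]
    rw [pascalP n (fun k => p.eval (k:ℝ))]
    rw [← ih q hdq]
    apply Finset.sum_congr rfl
    intro k _
    rw [heq k]
    push_cast
    ring

theorem prod_pos' (n : ℕ) (x : ℝ) (hx : 0 < x) : 0 < ∏ i ∈ range n, (x + i) :=
  Finset.prod_pos (fun i _ => by positivity)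

theorem altsum_inv (n : ℕ) (x : ℝ) (hx : 0 < x) :
    ∑ k ∈ range (n+1), (-1:ℝ)^k * n.choose k / (x + k)
      = n.factorial / ∏ i ∈ range (n+1), (x + i) := by
  induction n generalizing x with
  | zero => simp
  | succ n ih =>
    have key : ∑ k ∈ range (n+2), (-1:ℝ)^k * (n+1).choose k / (x + k)
        = ∑ k ∈ range (n+1), (-1:ℝ)^k * n.choose k * (1/(x + k) - 1/(x + ((k+1:ℕ):ℝ))) := by
      rw [← pascalP n (fun k => 1/(x + (k:ℝ)))]
      apply Finset.sum_congr rfl; intro k _; ring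
    have split : ∑ k ∈ range (n+1), (-1:ℝ)^k * n.choose k * (1/(x + k) - 1/(x + ((k+1:ℕ):ℝ)))
        = (∑ k ∈ range (n+1), (-1:ℝ)^k * n.choose k / (x + k))
          - ∑ k ∈ range (n+1), (-1:ℝ)^k * n.choose k / ((x+1) + k) := by
      rw [← Finset.sum_sub_distrib]
      apply Finset.sum_congr rfl; intro k _; push_cast; ring
    rw [key, split, ih x hx, ih (x+1) (by linarith)]
    have hP3b : ∏ i ∈ range (n+2), (x + i) = (∏ i ∈ range (n+1), ((x+1) + i)) * x := by
      rw [Finset.prod_range_succ' (fun i => x + (i:ℝ)) (n+1)]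
      congr 1
      · apply Finset.prod_congr rfl; intro k _; push_cast; ring
      · simp
    have hP3a : (∏ i ∈ range (n+1), (x + i)) * (x + ((n:ℝ)+1)) = (∏ i ∈ range (n+1), ((x+1) + i)) * x := by
      have A := Finset.prod_range_succ (fun i => x + (i:ℝ)) (n+1)
      rw [hP3b] at A; push_cast at A; linarith [A]
    have h1 : (0:ℝ) < ∏ i ∈ range (n+1), (x + i) := prod_pos' _ _ hx
    have h2 : (0:ℝ) < ∏ i ∈ range (n+1), ((x+1) + i) := prod_pos' _ _ (by linarith)
    rw [hP3b, Nat.factorial_succ]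
    rw [div_sub_div _ _ (ne_of_gt h1) (ne_of_gt h2),
      div_eq_div_iff (by positivity) (by positivity)]
    push_cast
    linear_combination (-(n.factorial:ℝ) * ∏ i ∈ range (n+1), ((x+1) + i)) * hP3a

theorem prod_asc (k : ℕ) : ∀ n : ℕ, ∏ i ∈ range n, ((k:ℝ)+1+i) = ((k+n).factorial : ℝ) / (k.factorial : ℝ)
  | 0 => by
    rw [Finset.prod_range_zero, Nat.add_zero, div_self (Nat.cast_ne_zero.mpr k.factorial_ne_zero)]
  | (n+1) => by
    rw [Finset.prod_range_succ, prod_asc k n]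
    have : (k+(n+1)).factorial = (k+n).factorial * (k+n+1) := by
      rw [show k+(n+1) = (k+n)+1 by ring, Nat.factorial_succ]; ring
    rw [this, div_mul_eq_mul_div]
    push_cast
    ring

theorem erase_split (N j : ℕ) (hj : j ≤ N) :
    (range (N+1)).erase j = range j ∪ Ico (j+1) (N+1) := by
  ext i
  simp only [mem_erase, mem_range, mem_union, mem_Ico]
  omega

theorem eval_c (N j : ℕ) (hj : j ≤ N) :
    ∏ i ∈ (range (N+1)).erase j, ((i:ℝ) - j)
      = (-1:ℝ)^j * (j.factorial : ℝ) * ((N-j).factorial : ℝ) := by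
  rw [erase_split N j hj, Finset.prod_union (by
    simp only [Finset.disjoint_left, mem_range, mem_Ico]; omega)]
  have h1 : ∏ i ∈ range j, ((i:ℝ) - j) = (-1:ℝ)^j * (j.factorial : ℝ) := by
    rw [← Finset.prod_range_reflect (fun i => (i:ℝ) - j) j]
    have : ∀ i ∈ range j, ((j - 1 - i : ℕ) : ℝ) - (j:ℝ) = (-1) * ((i:ℝ)+1) := by
      intro i hi
      rw [mem_range] at hi
      rw [Nat.cast_sub (by omega), Nat.cast_sub (by omega)]
      push_cast
      ring
    rw [Finset.prod_congr rfl this, Finset.prod_mul_distrib, Finset.prod_const,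
      Finset.card_range]
    congr 1
    exact_mod_cast Finset.prod_range_add_one_eq_factorial j
  have h2 : ∏ i ∈ Ico (j+1) (N+1), ((i:ℝ) - j) = ((N-j).factorial : ℝ) := by
    rw [Finset.prod_Ico_eq_prod_range]
    have : ∀ i ∈ range (N+1-(j+1)), ((j+1+i : ℕ) : ℝ) - (j:ℝ) = ((i:ℝ)+1) := by
      intro i _; push_cast; ring
    rw [Finset.prod_congr rfl this, show N+1-(j+1) = N - j by omega]
    exact_mod_cast Finset.prod_range_add_one_eq_factorial (N-j)
  rw [h1, h2]

theorem keyK (N j m : ℕ) (hj : j ≤ N) (hm : m ≤ N) :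
    ∑ k ∈ range (N+1), (-1:ℝ)^k * ((N+k+1).factorial:ℝ) /
        (((j:ℝ)+k+1) * ((m:ℝ)+k+1) * ((N-k).factorial:ℝ) * ((k.factorial:ℝ))^2)
      = if j = m then
          (-1:ℝ)^j * ((j.factorial:ℝ))^2 * ((N-j).factorial:ℝ) / ((N+j+1).factorial:ℝ)
        else 0 := by
  have hNfac : ((N.factorial : ℝ)) ≠ 0 := Nat.cast_ne_zero.mpr N.factorial_ne_zero
  have hjm : j ∈ range (N+1) := mem_range.mpr (by omega)
  -- step 1 : rewrite each term
  have step1 : ∀ k ∈ range (N+1),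
      (-1:ℝ)^k * ((N+k+1).factorial:ℝ) /
        (((j:ℝ)+k+1) * ((m:ℝ)+k+1) * ((N-k).factorial:ℝ) * ((k.factorial:ℝ))^2)
      = (-1:ℝ)^k * (N.choose k : ℝ) *
          ((∏ i ∈ (range (N+1)).erase j, ((k:ℝ)+1+i)) /
            ((N.factorial : ℝ) * (((m:ℝ)+k+1)))) := by
    intro k hk
    rw [mem_range] at hk
    have hsplit : ∏ i ∈ range (N+1), ((k:ℝ)+1+i)
        = ((k:ℝ)+1+j) * ∏ i ∈ (range (N+1)).erase j, ((k:ℝ)+1+i) :=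
      (Finset.mul_prod_erase _ _ hjm).symm
    have hpa := prod_asc k (N+1)
    rw [hsplit] at hpa
    -- hpa : (k+1+j)*∏' = (k+N+1)!/k!
    have h1 : ((k.factorial:ℝ)) ≠ 0 := Nat.cast_ne_zero.mpr k.factorial_ne_zero
    have h2 : ((k:ℝ)+1+j) ≠ 0 := by positivity
    have h3 : (((N-k).factorial:ℝ)) ≠ 0 := Nat.cast_ne_zero.mpr (N-k).factorial_ne_zero
    have h4 : ((m:ℝ)+k+1) ≠ 0 := by positivity
    have h5 : ((j:ℝ)+k+1) ≠ 0 := by positivity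
    have hprod : ∏ i ∈ (range (N+1)).erase j, ((k:ℝ)+1+i)
        = ((k+(N+1)).factorial : ℝ) / ((k.factorial : ℝ) * ((k:ℝ)+1+j)) := by
      field_simp at hpa ⊢
      linarith [hpa]
    rw [hprod]
    rw [Nat.cast_choose ℝ (by omega : k ≤ N)]
    have hfe : ((k+(N+1)).factorial : ℝ) = ((N+k+1).factorial : ℝ) := by
      norm_num; ring_nf
    rw [hfe]
    field_simp
    ring
  rw [Finset.sum_congr rfl step1]
  by_cases hcase : j = m
  · subst hcase
    simp only [if_pos rfl]
    -- q and its decomposition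
    set s : Finset ℕ := (range (N+1)).erase j with hs
    set q : ℝ[X] := ∏ i ∈ s, (X + C ((1:ℝ)+i)) with hqdef
    have hqeval : ∀ x : ℝ, q.eval x = ∏ i ∈ s, (x + (1+(i:ℝ))) := by
      intro x; rw [hqdef, Polynomial.eval_prod]; apply Finset.prod_congr rfl; intro i _; simp
    set c : ℝ := q.eval (-(1+(j:ℝ))) with hc
    obtain ⟨r, hr⟩ := Polynomial.X_sub_C_dvd_sub_C_eval (a := -(1+(j:ℝ))) (p := q)
    have hqk : ∀ k : ℕ, ∏ i ∈ s, ((k:ℝ)+1+i)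
        = c + ((j:ℝ)+k+1) * r.eval (k:ℝ) := by
      intro k
      have := congrArg (Polynomial.eval (k:ℝ)) hr
      simp only [Polynomial.eval_sub, Polynomial.eval_mul, Polynomial.eval_X,
        Polynomial.eval_C] at this
      rw [hqeval] at this
      have h' : ∏ i ∈ s, ((k:ℝ) + (1+(i:ℝ))) = c + ((k:ℝ) - -(1+(j:ℝ))) * r.eval (k:ℝ) := by
        linarith [this]
      rw [show ∀ z : ℝ, (∏ i ∈ s, ((k:ℝ)+1+i)) = ∏ i ∈ s, ((k:ℝ) + (1+(i:ℝ))) from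
        fun z => Finset.prod_congr rfl (fun i _ => by ring), h']
      · ring_nf
      · exact 0
    -- degree facts
    have hmon : q.Monic := Polynomial.monic_prod_of_monic _ _ (fun i _ => monic_X_add_C _)
    have hq0 : q ≠ 0 := hmon.ne_zero
    have hcard : s.card = N := by
      rw [hs, Finset.card_erase_of_mem hjm, Finset.card_range]
      omega
    have hndq : q.natDegree = N := by
      rw [hqdef, Polynomial.natDegree_prod _ _ (fun i _ => (monic_X_add_C _).ne_zero)]
      have h1 : ∀ i ∈ s, (X + C ((1:ℝ)+i)).natDegree = 1 := fun i _ =>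
        Polynomial.natDegree_X_add_C _
      rw [Finset.sum_congr rfl h1, Finset.sum_const, smul_eq_mul, mul_one, hcard]
    have hsum2 : ∑ k ∈ range (N+1), (-1:ℝ)^k * (N.choose k : ℝ) * r.eval (k:ℝ) = 0 := by
      by_cases hr0 : r = 0
      · simp [hr0]
      · apply altsum_poly
        have h1 : (q - C c).natDegree ≤ N := by
          refine le_trans (Polynomial.natDegree_sub_le _ _) ?_
          simp [hndq, Polynomial.natDegree_C]
        rw [hr, Polynomial.natDegree_mul (Polynomial.X_sub_C_ne_zero _) hr0,
          Polynomial.natDegree_X_sub_C] at h1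
        exact (Polynomial.natDegree_lt_iff_degree_lt hr0).mp (by omega)
    have hsum1 := altsum_inv N ((j:ℝ)+1) (by positivity)
    have hprodj := prod_asc j (N+1)
    have hcval : c = (-1:ℝ)^j * (j.factorial : ℝ) * ((N-j).factorial : ℝ) := by
      rw [hc, hqeval, ← eval_c N j hj]
      apply Finset.prod_congr rfl; intro i _; ring
    have hNj : ((j:ℝ)+N+1) ≠ 0 := by positivity
    calc ∑ k ∈ range (N+1), (-1:ℝ)^k * (N.choose k : ℝ) *
            ((∏ i ∈ (range (N+1)).erase j, ((k:ℝ)+1+i)) / ((N.factorial : ℝ) * (((j:ℝ)+k+1))))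
        = ∑ k ∈ range (N+1), ((c/(N.factorial:ℝ)) * ((-1:ℝ)^k * (N.choose k : ℝ) / (((j:ℝ)+1)+k))
            + (1/(N.factorial:ℝ)) * ((-1:ℝ)^k * (N.choose k : ℝ) * r.eval (k:ℝ))) := by
          apply Finset.sum_congr rfl
          intro k _
          rw [hqk k]
          have hjk : ((j:ℝ)+k+1) ≠ 0 := by positivity
          field_simp
          try ring
      _ = (c/(N.factorial:ℝ)) * (∑ k ∈ range (N+1), (-1:ℝ)^k * (N.choose k : ℝ) / (((j:ℝ)+1)+k))
            + (1/(N.factorial:ℝ)) * ∑ k ∈ range (N+1), (-1:ℝ)^k * (N.choose k : ℝ) * r.eval (k:ℝ) := by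
          rw [Finset.sum_add_distrib, Finset.mul_sum, Finset.mul_sum]
      _ = (c/(N.factorial:ℝ)) * ((N.factorial:ℝ) / (((j+(N+1)).factorial : ℝ) / (j.factorial : ℝ))) + 0 := by
          rw [hsum1, hsum2, hprodj, mul_zero]
      _ = (-1:ℝ)^j * ((j.factorial:ℝ))^2 * ((N-j).factorial:ℝ) / ((N+j+1).factorial:ℝ) := by
          rw [hcval, show j+(N+1) = N+j+1 by omega]
          have hfj : ((j.factorial:ℝ)) ≠ 0 := Nat.cast_ne_zero.mpr j.factorial_ne_zero
          have hfNj : (((N+j+1).factorial:ℝ)) ≠ 0 := Nat.cast_ne_zero.mpr (N+j+1).factorial_ne_zero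
          field_simp
          ring
  · simp only [if_neg hcase]
    have hms : m ∈ (range (N+1)).erase j := by
      rw [mem_erase, mem_range]; exact ⟨fun h => hcase (h.symm), by omega⟩
    set s2 : Finset ℕ := ((range (N+1)).erase j).erase m with hs2
    set p : ℝ[X] := ∏ i ∈ s2, (X + C ((1:ℝ)+i)) with hpdef
    have hpeval : ∀ x : ℝ, p.eval x = ∏ i ∈ s2, (x + (1+(i:ℝ))) := by
      intro x; rw [hpdef, Polynomial.eval_prod]; apply Finset.prod_congr rfl; intro i _; simp
    have hcard2 : s2.card = N - 1 := by
      rw [hs2, Finset.card_erase_of_mem hms, Finset.card_erase_of_mem hjm, Finset.card_range]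
      omega
    have hN1 : 1 ≤ N := by omega
    have hdp : p.degree < (N : WithBot ℕ) := by
      have hp0 : p ≠ 0 :=
        (Polynomial.monic_prod_of_monic _ _ (fun i _ => monic_X_add_C _)).ne_zero
      refine (Polynomial.natDegree_lt_iff_degree_lt hp0).mp ?_
      rw [hpdef, Polynomial.natDegree_prod _ _ (fun i _ => (monic_X_add_C _).ne_zero)]
      simp only [Polynomial.natDegree_X_add_C]
      rw [Finset.sum_const, smul_eq_mul, mul_one]
      omega
    calc ∑ k ∈ range (N+1), (-1:ℝ)^k * (N.choose k : ℝ) *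
            ((∏ i ∈ (range (N+1)).erase j, ((k:ℝ)+1+i)) / ((N.factorial : ℝ) * (((m:ℝ)+k+1))))
        = ∑ k ∈ range (N+1), (1/(N.factorial:ℝ)) * ((-1:ℝ)^k * (N.choose k : ℝ) * p.eval (k:ℝ)) := by
          apply Finset.sum_congr rfl
          intro k _
          have hsplit2 : ∏ i ∈ (range (N+1)).erase j, ((k:ℝ)+1+i)
              = ((k:ℝ)+1+m) * ∏ i ∈ s2, ((k:ℝ)+1+i) :=
            (Finset.mul_prod_erase _ _ hms).symm
          rw [hsplit2, hpeval]
          have hmk : ((m:ℝ)+k+1) ≠ 0 := by positivity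
          rw [show ∏ i ∈ s2, ((k:ℝ) + (1+(i:ℝ))) = ∏ i ∈ s2, ((k:ℝ)+1+i) from
            Finset.prod_congr rfl (fun i _ => by ring)]
          field_simp
          ring
      _ = 0 := by
          rw [← Finset.mul_sum, altsum_poly N p hdp, mul_zero]

theorem keyL (N j : ℕ) (hj : j ≤ N) (T : ℝ) (hT : 0 < T) (μ : ℕ) (hμ : μ ≤ N) :
    ∑ k ∈ range (N+1),
      (((N+j+1).factorial : ℝ) / (T^(j+1) * (j.factorial:ℝ) * ((N-j).factorial:ℝ)))
        * ((-1:ℝ)^k * ((N+k+1).factorial:ℝ) / (((j:ℝ)+k+1) * ((N-k).factorial:ℝ) * ((k.factorial:ℝ))^2))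
        * (1/T^k) * (T^(k+μ+1) / ((k:ℝ)+μ+1))
      = if μ = j then (-1:ℝ)^j * (j.factorial:ℝ) else 0 := by
  have hTne : T ≠ 0 := ne_of_gt hT
  have step : ∀ k ∈ range (N+1),
      (((N+j+1).factorial : ℝ) / (T^(j+1) * (j.factorial:ℝ) * ((N-j).factorial:ℝ)))
        * ((-1:ℝ)^k * ((N+k+1).factorial:ℝ) / (((j:ℝ)+k+1) * ((N-k).factorial:ℝ) * ((k.factorial:ℝ))^2))
        * (1/T^k) * (T^(k+μ+1) / ((k:ℝ)+μ+1))
      = (((N+j+1).factorial : ℝ) * T^(μ+1) / (T^(j+1) * (j.factorial:ℝ) * ((N-j).factorial:ℝ)))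
        * ((-1:ℝ)^k * ((N+k+1).factorial:ℝ) /
            (((j:ℝ)+k+1) * ((μ:ℝ)+k+1) * ((N-k).factorial:ℝ) * ((k.factorial:ℝ))^2)) := by
    intro k _
    have h1 : T^(k+μ+1) = T^k * T^(μ+1) := by rw [← pow_add]; ring_nf
    have h2 : ((j:ℝ)+k+1) ≠ 0 := by positivity
    have h3 : ((k:ℝ)+μ+1) ≠ 0 := by positivity
    have h4 : (((N-k).factorial:ℝ)) ≠ 0 := Nat.cast_ne_zero.mpr (N-k).factorial_ne_zero
    have h5 : ((k.factorial:ℝ)) ≠ 0 := Nat.cast_ne_zero.mpr k.factorial_ne_zero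
    have h6 : (((N-j).factorial:ℝ)) ≠ 0 := Nat.cast_ne_zero.mpr (N-j).factorial_ne_zero
    have h7 : ((j.factorial:ℝ)) ≠ 0 := Nat.cast_ne_zero.mpr j.factorial_ne_zero
    rw [h1]
    field_simp
    ring
  rw [Finset.sum_congr rfl step, ← Finset.mul_sum, keyK N j μ hj hμ]
  by_cases hc : j = μ
  · subst hc
    simp only [if_pos rfl, ↓reduceIte]
    have h7 : ((j.factorial:ℝ)) ≠ 0 := Nat.cast_ne_zero.mpr j.factorial_ne_zero
    have h6 : (((N-j).factorial:ℝ)) ≠ 0 := Nat.cast_ne_zero.mpr (N-j).factorial_ne_zero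
    have h8 : (((N+j+1).factorial:ℝ)) ≠ 0 := Nat.cast_ne_zero.mpr (N+j+1).factorial_ne_zero
    field_simp
  · rw [if_neg hc, if_neg (fun h => hc h.symm), mul_zero]

theorem iter_poly (M : ℕ) (b : ℕ → ℝ) (j : ℕ) :
    iteratedDeriv j (fun s : ℝ => ∑ i ∈ range M, b i * s ^ i)
      = fun t => ∑ i ∈ range M, b i * (i.descFactorial j : ℝ) * t ^ (i - j) := by
  induction j with
  | zero =>
    funext t
    simp
  | succ j ih =>
    rw [iteratedDeriv_succ, ih]
    funext t
    rw [deriv_fun_sum (fun i _ => by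
      exact (differentiableAt_pow (𝕜 := ℝ) _).const_mul _)]
    apply Finset.sum_congr rfl
    intro i _
    rw [deriv_const_mul _ (differentiableAt_pow (𝕜 := ℝ) _), deriv_pow_field]
    rw [Nat.descFactorial_succ, Nat.sub_sub]
    push_cast
    ring

theorem stmt9 (N : ℕ) (a : Fin (N + 1) → ℝ) (y : ℝ → ℝ)
    (hy : ∀ s, y s = ∑ i : Fin (N + 1), a i / (i : ℕ).factorial * s ^ (i : ℕ))
    (j : ℕ) (hj : j ≤ N) (T t : ℝ) (hT : 0 < T) (ht : T ≤ t) :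
    ∫ σ in (0:ℝ)..T,
        (((N + j + 1).factorial : ℝ) / (T ^ (j + 1) * j.factorial * (N - j).factorial)) *
          (∑ k ∈ Finset.range (N + 1),
            ((-1 : ℝ) ^ k * ((N + k + 1).factorial : ℝ) /
                ((j + k + 1) * ((N - k).factorial : ℝ) * (k.factorial : ℝ) ^ 2)) *
              (σ / T) ^ k) * y (t - σ) =
      iteratedDeriv j y t := by
  have hTne : T ≠ 0 := ne_of_gt hT
  set b : ℕ → ℝ := fun i => (if h : i < N + 1 then a ⟨i, h⟩ else 0) / i.factorial with hb
  have hy' : y = fun s => ∑ i ∈ range (N+1), b i * s ^ i := by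
    funext s
    rw [hy s, ← Fin.sum_univ_eq_sum_range (fun i => b i * s ^ i) (N+1)]
    apply Finset.sum_congr rfl
    intro i _
    simp only [hb, i.isLt, dif_pos, Fin.eta]
  rw [hy', iter_poly]
  -- abbreviations
  set C : ℝ := ((N + j + 1).factorial : ℝ) / (T ^ (j + 1) * (j.factorial:ℝ) * ((N - j).factorial:ℝ)) with hC
  set ck : ℕ → ℝ := fun k => (-1 : ℝ) ^ k * ((N + k + 1).factorial : ℝ) /
      (((j:ℝ) + k + 1) * ((N - k).factorial : ℝ) * ((k.factorial:ℝ)) ^ 2) with hck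
  set F : ℕ → ℕ → ℕ → ℝ := fun k i m =>
    (C * ck k * (1/T^k)) * (b i * ((-1:ℝ)^(m+i) * t^m * (i.choose m : ℝ))) with hF
  -- binomial expansion valid on range (N+1)
  have hsub : ∀ i ∈ range (N+1), ∀ σ : ℝ, (t - σ)^i
      = ∑ m ∈ range (N+1), (-1:ℝ)^(m+i) * t^m * σ^(i-m) * (i.choose m : ℝ) := by
    intro i hi σ
    rw [mem_range] at hi
    rw [sub_pow]
    apply Finset.sum_subset (Finset.range_subset_range.mpr (by omega))
    intro m _ hm
    rw [mem_range, not_lt] at hm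
    rw [Nat.choose_eq_zero_of_lt (by omega)]
    simp
  -- pointwise expansion of the integrand
  have hpt : ∀ σ : ℝ,
      C * (∑ k ∈ range (N+1), ck k * (σ / T) ^ k) * (∑ i ∈ range (N+1), b i * (t - σ)^i)
      = ∑ k ∈ range (N+1), ∑ i ∈ range (N+1), ∑ m ∈ range (N+1),
          F k i m * σ ^ (k + (i - m)) := by
    intro σ
    rw [mul_assoc, Finset.sum_mul_sum, Finset.mul_sum]
    apply Finset.sum_congr rfl
    intro k _
    rw [Finset.mul_sum]
    apply Finset.sum_congr rfl
    intro i hi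
    rw [hsub i hi σ, Finset.mul_sum, Finset.mul_sum, Finset.mul_sum]
    apply Finset.sum_congr rfl
    intro m _
    simp only [hF]
    rw [div_pow, pow_add]
    ring
  have hpt2 : Set.EqOn
      (fun σ => C * (∑ k ∈ range (N+1), ck k * (σ / T) ^ k) * (∑ i ∈ range (N+1), b i * (t - σ)^i))
      (fun σ => ∑ p ∈ (range (N+1)) ×ˢ ((range (N+1)) ×ˢ (range (N+1))),
          F p.1 p.2.1 p.2.2 * σ ^ (p.1 + (p.2.1 - p.2.2)))
      (Set.uIcc 0 T) := by
    intro σ _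
    simp only []
    rw [hpt σ, Finset.sum_product]
    apply Finset.sum_congr rfl
    intro k _
    rw [Finset.sum_product]
  -- compute the integral
  have hint : ∀ (c : ℝ) (e : ℕ), (∫ σ in (0:ℝ)..T, c * σ^e) = c * (T^(e+1)/((e:ℝ)+1)) := by
    intro c e
    rw [intervalIntegral.integral_const_mul, integral_pow]
    norm_num
  have hintg : ∀ (e : ℕ) (c : ℝ), IntervalIntegrable (fun σ => c * σ ^ e) volume 0 T :=
    fun e c => ((continuous_const.mul (continuous_pow e)).intervalIntegrable _ _)
  have hI : (∫ σ in (0:ℝ)..T,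
        C * (∑ k ∈ range (N+1), ck k * (σ / T) ^ k) * (∑ i ∈ range (N+1), b i * (t - σ)^i))
      = ∑ k ∈ range (N+1), ∑ i ∈ range (N+1), ∑ m ∈ range (N+1),
          F k i m * (T^((k + (i - m))+1)/((↑(k + (i - m)):ℝ)+1)) := by
    rw [intervalIntegral.integral_congr hpt2,
      intervalIntegral.integral_finset_sum (fun p _ => hintg _ _)]
    rw [Finset.sum_product]
    apply Finset.sum_congr rfl
    intro k _
    rw [Finset.sum_product]
    apply Finset.sum_congr rfl
    intro i _
    apply Finset.sum_congr rfl
    intro m _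
    exact hint _ _
  rw [hI, Finset.sum_comm]
  apply Finset.sum_congr rfl
  intro i hi
  rw [mem_range] at hi
  rw [Finset.sum_comm]
  have hkey : ∀ m : ℕ, (∑ k ∈ range (N+1),
      F k i m * (T^((k + (i - m))+1)/((↑(k + (i - m)):ℝ)+1)))
      = (b i * ((-1:ℝ)^(m+i) * t^m * (i.choose m : ℝ)))
        * (if (i - m) = j then (-1:ℝ)^j * (j.factorial:ℝ) else 0) := by
    intro m
    have hμ : i - m ≤ N := le_trans (Nat.sub_le _ _) (by omega)
    have h := keyL N j hj T hT (i-m) hμ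
    calc (∑ k ∈ range (N+1), F k i m * (T^((k + (i - m))+1)/((↑(k + (i - m)):ℝ)+1)))
        = (b i * ((-1:ℝ)^(m+i) * t^m * (i.choose m : ℝ))) * ∑ k ∈ range (N+1),
            (((N+j+1).factorial : ℝ) / (T^(j+1) * (j.factorial:ℝ) * ((N-j).factorial:ℝ)))
              * ((-1:ℝ)^k * ((N+k+1).factorial:ℝ) /
                  (((j:ℝ)+k+1) * ((N-k).factorial:ℝ) * ((k.factorial:ℝ))^2))
              * (1/T^k) * (T^(k+(i-m)+1) / ((k:ℝ)+(i-m:ℕ)+1)) := by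
          rw [Finset.mul_sum]
          apply Finset.sum_congr rfl
          intro k _
          simp only [hF, hC, hck]
          push_cast
          ring
      _ = _ := by rw [h]
  rw [Finset.sum_congr rfl (fun m _ => hkey m)]
  by_cases hij : j ≤ i
  · rw [Finset.sum_eq_single (i-j) ?side ?notmem]
    case side =>
      intro m _ hne
      by_cases hc : i - m = j
      · rw [if_pos hc]
        have : i < m := by omega
        simp [Nat.choose_eq_zero_of_lt this]
      · rw [if_neg hc, mul_zero]
    case notmem =>
      intro hnot
      exact absurd (mem_range.mpr (by omega)) hnot
    rw [if_pos (by omega : i - (i - j) = j)]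
    rw [Nat.choose_symm hij, Nat.descFactorial_eq_factorial_mul_choose]
    have hsign : (-1:ℝ)^(i-j+i) * (-1:ℝ)^j = 1 := by
      rw [← pow_add, show i-j+i+j = 2*i by omega, pow_mul]
      norm_num
    push_cast
    linear_combination (b i * t^(i-j) * (i.choose j : ℝ) * (j.factorial:ℝ)) * hsign
  · have hz : i.descFactorial j = 0 := Nat.descFactorial_eq_zero_iff_lt.mpr (by omega)
    rw [hz]
    rw [Finset.sum_eq_zero]
    · norm_num
    · intro m _
      rw [if_neg (by omega), mul_zero]
end

section
/- Let y(t) = Σ_{i=0}^{N} (aᵢ/i!)·tⁱ. For T > 0, t ≥ T, and 0 ≤ j ≤ N, the convolution ∫₀^T H_j(T,τ)·y(t-τ) dτ equals y^{(j)}(t), where H_j(T,τ) = ((N+j+1)!·(N+1)!/T^{N+j+1}) · Σ_{κ₁=0}^{N-j} Σ_{κ₂=0}^{j} (T-τ)^{κ₁+κ₂}·(-τ)^{N-κ₁-κ₂} / (κ₁!·κ₂!·(N-j-κ₁)!·(j-κ₂)!·(N-κ₁-κ₂)!·(κ₁+κ₂)!·(N-κ₁+1)). -/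
open Finset

set_option maxHeartbeats 1000000



-- L1
lemma L1 (j : ℕ) : ∀ n m : ℕ, j ≤ n →
    ∑ q ∈ range (j+1), (-1:ℝ)^q * (j.choose q) * ((n-q).choose m) =
      if j ≤ m then ((n-j).choose (m-j) : ℝ) else 0 := by
  induction j with
  | zero => intro n m _; simp
  | succ j ih =>
    intro n m hn
    have hjn : j ≤ n - 1 := by omega
    rw [Finset.sum_range_succ']
    have key : ∀ q ∈ range (j+1), (-1:ℝ)^(q+1) * ((j+1).choose (q+1)) * ((n-(q+1)).choose m)
        = -((-1:ℝ)^q * (j.choose q) * (((n-1)-q).choose m))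
          + (-1:ℝ)^(q+1) * (j.choose (q+1)) * (((n-1)-q).choose m) := by
      intro q hq
      have : n - (q+1) = (n-1) - q := by omega
      rw [this, Nat.choose_succ_succ]
      push_cast
      ring
    rw [Finset.sum_congr rfl key, Finset.sum_add_distrib, Finset.sum_neg_distrib, ih (n-1) m hjn]
    -- remaining: ∑ (-1)^(q+1) C(j,q+1) C(n-1-q,m) + first term = ih n m
    have e2 : ∑ q ∈ range (j+1), (-1:ℝ)^(q+1) * (j.choose (q+1)) * (((n-1)-q).choose m)
        + (-1:ℝ)^0 * ((j+1).choose 0) * ((n-0).choose m)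
        = ∑ q ∈ range (j+1+1), (-1:ℝ)^q * (j.choose q) * ((n-q).choose m) := by
      rw [Finset.sum_range_succ' (fun q => (-1:ℝ)^q * (j.choose q) * ((n-q).choose m)) (j+1)]
      congr 1
      · apply Finset.sum_congr rfl; intro q hq
        have : n - (q+1) = (n-1) - q := by omega
        rw [this]
      · simp
    have e3 : ∑ q ∈ range (j+1+1), (-1:ℝ)^q * (j.choose q) * ((n-q).choose m)
        = ∑ q ∈ range (j+1), (-1:ℝ)^q * (j.choose q) * ((n-q).choose m) := by
      rw [Finset.sum_range_succ]
      simp [Nat.choose_succ_self]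
    have e5 : ((-1:ℝ)^0 * (((j+1).choose 0 : ℕ) : ℝ) * (((n-0).choose m : ℕ) : ℝ)
          + -(if j ≤ m then (((n-1-j).choose (m-j) : ℕ) : ℝ) else 0))
        + ∑ x ∈ range (j+1), (-1:ℝ)^(x+1) * ((j.choose (x+1) : ℕ) : ℝ) * (((n-1-x).choose m : ℕ) : ℝ)
        = (if j ≤ m then (((n-j).choose (m-j) : ℕ) : ℝ) else 0)
          + -(if j ≤ m then (((n-1-j).choose (m-j) : ℕ) : ℝ) else 0) := by
      rw [← ih n m (by omega), ← e3, ← e2]; ring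
    by_cases hm : j + 1 ≤ m
    · have h1 : n - j = (n - (j+1)) + 1 := by omega
      have h2 : m - j = (m - (j+1)) + 1 := by omega
      have h3 : n - 1 - j = n - (j+1) := by omega
      have pasN : (n - j).choose (m - j)
          = (n - (j+1)).choose (m - (j+1)) + (n - 1 - j).choose (m - j) := by
        rw [h1, h2, Nat.choose_succ_succ, Nat.succ_eq_add_one, ← h2, h3]
      have pas : (((n-j).choose (m-j) : ℕ) : ℝ)
          = (((n-(j+1)).choose (m-(j+1)) : ℕ) : ℝ) + (((n-1-j).choose (m-j) : ℕ) : ℝ) := by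
        exact_mod_cast congrArg (Nat.cast : ℕ → ℝ) pasN
      simp only [if_pos hm, if_pos (show j ≤ m by omega)] at e5 ⊢
      linarith [e5, pas]
    · by_cases hm' : j ≤ m
      · have hmj : m = j := by omega
        subst hmj
        simp only [if_neg hm, if_pos le_rfl, Nat.sub_self, Nat.choose_zero_right,
          Nat.cast_one] at e5 ⊢
        linarith [e5]
      · simp only [if_neg hm, if_neg hm'] at e5 ⊢
        linarith [e5]


lemma PL (B : ℕ) : ∀ A : ℕ, (B.factorial : ℝ) * ∏ i ∈ range (A+1), ((B:ℝ)+1+i) = ((A+B+1).factorial : ℝ) := by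
  intro A
  induction A with
  | zero => simp [Nat.factorial_succ]; ring
  | succ A ih =>
    rw [prod_range_succ, ← mul_assoc, ih]
    have h : A + 1 + B + 1 = (A + B + 1) + 1 := by omega
    rw [h, Nat.factorial_succ (A+B+1)]
    push_cast
    ring

lemma prodpos (K : ℕ) (x : ℝ) (hx : 0 < x) : 0 < ∏ i ∈ range (K+1), (x + i) :=
  Finset.prod_pos (fun i _ => by positivity)

lemma L2 (K : ℕ) : ∀ x : ℝ, 0 < x →
    ∑ p ∈ range (K+1), (-1:ℝ)^p * (K.choose p) / (x + p) =
      (K.factorial : ℝ) / ∏ i ∈ range (K+1), (x + i) := by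
  induction K with
  | zero => intro x hx; simp
  | succ K ih =>
    intro x hx
    have hx0 : x ≠ 0 := ne_of_gt hx
    have hP0 : (0:ℝ) < ∏ i ∈ range (K+1), (x + i) := prodpos K x hx
    have hP1 : (0:ℝ) < ∏ i ∈ range (K+1), ((x+1) + i) := prodpos K (x+1) (by linarith)
    -- hB : the shifted tail sum
    have hB : ∑ p ∈ range (K+1), (-1:ℝ)^(p+1) * (K.choose (p+1)) / ((x+1) + p)
        = (K.factorial : ℝ) / (∏ i ∈ range (K+1), (x + i)) - 1/x := by
      have h0 := ih x hx
      rw [Finset.sum_range_succ' (fun p => (-1:ℝ)^p * (K.choose p) / (x + p)) K] at h0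
      have hconv : ∑ p ∈ range K, (-1:ℝ)^(p+1) * (K.choose (p+1)) / (x + ((p+1:ℕ):ℝ))
          = ∑ p ∈ range K, (-1:ℝ)^(p+1) * (K.choose (p+1)) / ((x+1) + p) := by
        apply Finset.sum_congr rfl; intro p hp
        congr 1
        push_cast; ring
      rw [hconv] at h0
      rw [Finset.sum_range_succ]
      simp only [Nat.choose_succ_self, Nat.cast_zero, mul_zero, zero_mul, zero_div, add_zero]
      simp only [Nat.cast_ofNat, pow_zero, Nat.choose_zero_right, Nat.cast_one, one_mul,
        Nat.cast_zero, add_zero] at h0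
      linarith [h0]
    have key : ∀ p ∈ range (K+1), (-1:ℝ)^(p+1) * (((K+1).choose (p+1) : ℕ) : ℝ) / (x + ((p+1:ℕ):ℝ))
        = -((-1:ℝ)^p * (K.choose p) / ((x+1) + p))
          + (-1:ℝ)^(p+1) * (K.choose (p+1)) / ((x+1) + p) := by
      intro p hp
      have hne : (x+1) + (p:ℝ) ≠ 0 := by positivity
      rw [Nat.choose_succ_succ]
      push_cast
      rw [show x + ((p:ℝ)+1) = (x+1) + p by ring]
      field_simp
      ring
    rw [Finset.sum_range_succ']
    rw [Finset.sum_congr rfl key, Finset.sum_add_distrib, Finset.sum_neg_distrib, ih (x+1) (by linarith), hB]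
    simp only [pow_zero, Nat.choose_zero_right, Nat.cast_one, one_mul, Nat.cast_zero, add_zero]
    -- goal: -(K!/P1) + (K!/P0 - 1/x) + 1/x = (K+1)!/Q
    have hQ : ∏ i ∈ range (K+1+1), (x + i) = (∏ i ∈ range (K+1), (x + i)) * (x + (K+1)) := by
      rw [prod_range_succ]; push_cast; ring_nf
    have hQ' : ∏ i ∈ range (K+1+1), (x + i) = x * ∏ i ∈ range (K+1), ((x+1) + i) := by
      rw [Finset.prod_range_succ' (fun i => x + (i:ℝ)) (K+1)]
      simp only [Nat.cast_zero, add_zero]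
      rw [mul_comm]
      congr 1
      apply Finset.prod_congr rfl; intro i hi
      push_cast; ring
    have hrel : (∏ i ∈ range (K+1), (x + i)) * (x + (K+1)) = x * ∏ i ∈ range (K+1), ((x+1) + i) := by
      rw [← hQ, hQ']
    rw [hQ', Nat.factorial_succ]
    push_cast
    have main : (K.factorial:ℝ)/(∏ i ∈ range (K+1), (x + (i:ℝ)))
        - (K.factorial:ℝ)/(∏ i ∈ range (K+1), ((x+1) + (i:ℝ)))
        = ((K:ℝ)+1)*(K.factorial:ℝ)/(x * ∏ i ∈ range (K+1), ((x+1) + (i:ℝ))) := by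
      rw [div_sub_div _ _ (ne_of_gt hP0) (ne_of_gt hP1),
        div_eq_div_iff (by positivity) (by positivity)]
      linear_combination (-(K.factorial:ℝ) * (∏ i ∈ range (K+1), ((x+1) + (i:ℝ)))) * hrel
    calc -((K.factorial:ℝ) / ∏ i ∈ range (K+1), ((x+1) + (i:ℝ)))
          + ((K.factorial:ℝ) / (∏ i ∈ range (K+1), (x + (i:ℝ))) - 1/x) + 1/x
        = (K.factorial:ℝ)/(∏ i ∈ range (K+1), (x + (i:ℝ)))
          - (K.factorial:ℝ)/(∏ i ∈ range (K+1), ((x+1) + (i:ℝ))) := by ring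
      _ = ((K:ℝ)+1)*(K.factorial:ℝ)/(x * ∏ i ∈ range (K+1), ((x+1) + (i:ℝ))) := main


lemma Beta (A B : ℕ) (T : ℝ) :
    ∫ τ in (0:ℝ)..T, (T - τ)^A * τ^B
      = (A.factorial : ℝ) * B.factorial / ((A+B+1).factorial) * T^(A+B+1) := by
  have expand : ∀ τ : ℝ, (T - τ)^A * τ^B
      = ∑ k ∈ range (A+1), (-1:ℝ)^k * (A.choose k) * T^(A-k) * τ^(k+B) := by
    intro τ
    rw [sub_eq_neg_add, add_pow, Finset.sum_mul]
    apply Finset.sum_congr rfl; intro k hk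
    rw [neg_pow, pow_add]
    ring
  rw [intervalIntegral.integral_congr (g := fun τ => ∑ k ∈ range (A+1), (-1:ℝ)^k * (A.choose k) * T^(A-k) * τ^(k+B)) (fun τ _ => expand τ)]
  rw [intervalIntegral.integral_finset_sum]
  swap
  · intro k hk
    apply Continuous.intervalIntegrable
    continuity
  have step : ∀ k ∈ range (A+1), (∫ τ in (0:ℝ)..T, (-1:ℝ)^k * (A.choose k) * T^(A-k) * τ^(k+B))
      = ((-1:ℝ)^k * (A.choose k) / (((B:ℝ)+1) + k)) * T^(A+B+1) := by
    intro k hk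
    simp only [Finset.mem_range] at hk
    rw [intervalIntegral.integral_const_mul, integral_pow]
    have h1 : ((0:ℝ))^(k+B+1) = 0 := by
      exact zero_pow (by omega)
    rw [h1]
    have h2 : T^(A-k) * (T^(k+B+1)) = T^(A+B+1) := by
      rw [← pow_add]; congr 1; omega
    have h3 : ((k+B+1 : ℕ) : ℝ) = ((B:ℝ)+1) + k := by push_cast; ring
    rw [sub_zero]
    field_simp [h3]
    rw [← h2]
    push_cast
    ring
  rw [Finset.sum_congr rfl step, ← Finset.sum_mul]
  have hL2 := L2 A ((B:ℝ)+1) (by positivity)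
  congr 1
  rw [hL2]
  have hprodpos : (0:ℝ) < ∏ i ∈ range (A+1), (((B:ℝ)+1) + i) :=
    Finset.prod_pos (fun i _ => by positivity)
  rw [div_eq_div_iff (ne_of_gt hprodpos) (by positivity)]
  linear_combination (-(A.factorial:ℝ)) * (PL B A)


lemma alg1 (a b x d Jf F Mf C1 C2 s1 s2 : ℝ) (ha : a ≠ 0) (hb : b ≠ 0) (hx : x ≠ 0)
    (hd : d ≠ 0) (hJ : Jf ≠ 0) (hF : F ≠ 0) (hcc : C1 * d = C2 * x) :
    1/(a*b*x) * (s1*s2*Mf/Jf*C1) = (s1*Mf/(Jf*d*F)) * (s2*(F/(a*b))*C2) := by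
  field_simp
  linear_combination (s1*s2*Mf) * hcc

lemma fne (n : ℕ) : ((n.factorial : ℕ) : ℝ) ≠ 0 := Nat.cast_ne_zero.mpr (Nat.factorial_ne_zero n)

lemma inner_eq (N j m p : ℕ) (hj : j ≤ N) (hp : p ≤ N - j) :
    ∑ q ∈ range (j+1), (-1:ℝ)^(N-p-q) * ((N-p-q+m).factorial : ℝ) /
        ((q.factorial : ℝ) * ((j-q).factorial : ℝ) * ((N-p-q).factorial : ℝ))
    = (-1:ℝ)^(N-p) * (m.factorial : ℝ) / (j.factorial : ℝ) *
        (if j ≤ m then (((N-p+m-j).choose (m-j) : ℕ) : ℝ) else 0) := by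
  have hK : j ≤ N - p := by omega
  have hL := L1 j ((N-p)+m) m (by omega)
  have hsub : (N-p)+m-j = N-p+m-j := rfl
  rw [← hL, Finset.mul_sum]
  apply Finset.sum_congr rfl
  intro q hq
  rw [Finset.mem_range] at hq
  have hqj : q ≤ j := by omega
  have hqK : q ≤ N - p := le_trans hqj hK
  have e1 : (N-p)+m-q = N-p-q+m := by omega
  have e2 : ((N-p)+m-q) - m = N-p-q := by omega
  have c1 : ((j.choose q : ℕ) : ℝ) = (j.factorial : ℝ) / ((q.factorial : ℝ) * ((j-q).factorial : ℝ)) :=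
    Nat.cast_choose ℝ hqj
  have c2 : ((((N-p)+m-q).choose m : ℕ) : ℝ)
      = (((N-p)+m-q).factorial : ℝ) / ((m.factorial : ℝ) * ((((N-p)+m-q) - m).factorial : ℝ)) :=
    Nat.cast_choose ℝ (by omega)
  rw [c1, c2, e2, e1]
  have hsgn : (-1:ℝ)^(N-p-q) = (-1:ℝ)^(N-p) * (-1:ℝ)^q := by
    have h1 : (-1:ℝ)^(N-p-q) * (-1:ℝ)^q = (-1:ℝ)^(N-p) := by
      rw [← pow_add]; congr 1; omega
    have h2 : (-1:ℝ)^q * (-1:ℝ)^q = 1 := by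
      rw [← pow_add]
      exact Even.neg_one_pow ⟨q, by omega⟩
    calc (-1:ℝ)^(N-p-q) = (-1:ℝ)^(N-p-q) * ((-1:ℝ)^q * (-1:ℝ)^q) := by rw [h2, mul_one]
      _ = ((-1:ℝ)^(N-p-q) * (-1:ℝ)^q) * (-1:ℝ)^q := by ring
      _ = (-1:ℝ)^(N-p) * (-1:ℝ)^q := by rw [h1]
  rw [hsgn]
  field_simp

lemma Sid (N j m : ℕ) (hj : j ≤ N) (hm : m ≤ N) :
    ∑ p ∈ range (N-j+1), ∑ q ∈ range (j+1),
      (-1:ℝ)^(N-p-q) * ((N-p-q+m).factorial : ℝ) /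
        ((p.factorial : ℝ) * (q.factorial : ℝ) * ((N-j-p).factorial : ℝ) * ((j-q).factorial : ℝ)
          * ((N-p-q).factorial : ℝ) * (((N-p : ℕ) : ℝ) + 1))
    = if m = j then (-1:ℝ)^j * (j.factorial : ℝ) / ((N+1).factorial : ℝ) else 0 := by
  -- factor inner sums
  have outer : ∀ p ∈ range (N-j+1),
      ∑ q ∈ range (j+1), (-1:ℝ)^(N-p-q) * ((N-p-q+m).factorial : ℝ) /
        ((p.factorial : ℝ) * (q.factorial : ℝ) * ((N-j-p).factorial : ℝ) * ((j-q).factorial : ℝ)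
          * ((N-p-q).factorial : ℝ) * (((N-p : ℕ) : ℝ) + 1))
      = (1 / ((p.factorial : ℝ) * ((N-j-p).factorial : ℝ) * (((N-p : ℕ) : ℝ) + 1)))
        * ((-1:ℝ)^(N-p) * (m.factorial : ℝ) / (j.factorial : ℝ)
            * (if j ≤ m then (((N-p+m-j).choose (m-j) : ℕ) : ℝ) else 0)) := by
    intro p hp
    rw [Finset.mem_range] at hp
    rw [← inner_eq N j m p hj (by omega), Finset.mul_sum]
    apply Finset.sum_congr rfl
    intro q hq
    have h1 : ((N-p:ℕ):ℝ) + 1 ≠ 0 := by positivity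
    field_simp
  rw [Finset.sum_congr rfl outer]
  by_cases hmj : j ≤ m
  · by_cases hme : m = j
    · subst hme
      rw [if_pos rfl]
      have simp1 : ∀ p ∈ range (N-m+1),
          (1 / ((p.factorial : ℝ) * ((N-m-p).factorial : ℝ) * (((N-p : ℕ) : ℝ) + 1)))
            * ((-1:ℝ)^(N-p) * (m.factorial : ℝ) / (m.factorial : ℝ)
              * (if m ≤ m then (((N-p+m-m).choose (m-m) : ℕ) : ℝ) else 0))
          = (-1:ℝ)^(N-p) / ((p.factorial : ℝ) * ((N-m-p).factorial : ℝ) * (((N-p : ℕ) : ℝ) + 1)) := by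
        intro p hp
        rw [if_pos le_rfl, Nat.sub_self, Nat.choose_zero_right]
        have h1 : ((N-p:ℕ):ℝ) + 1 ≠ 0 := by positivity
        field_simp
        norm_num
      rw [Finset.sum_congr rfl simp1]
      -- reflect the sum
      rw [← Finset.sum_range_reflect]
      have simp2 : ∀ p ∈ range (N-m+1),
          (-1:ℝ)^(N-(N-m+1-1-p)) / (((N-m+1-1-p).factorial : ℝ) * ((N-m-(N-m+1-1-p)).factorial : ℝ)
            * (((N-(N-m+1-1-p) : ℕ) : ℝ) + 1))
          = ((-1:ℝ)^m / ((N-m).factorial : ℝ)) * ((-1:ℝ)^p * (((N-m).choose p : ℕ) : ℝ) / (((m:ℝ)+1) + p)) := by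
        intro p hp
        rw [Finset.mem_range] at hp
        have e1 : N-m+1-1-p = N-m-p := by omega
        have e2 : N-(N-m-p) = m+p := by omega
        have e3 : N-m-(N-m-p) = p := by omega
        rw [e1, e2, e3]
        have c1 : (((N-m).choose p : ℕ) : ℝ)
            = ((N-m).factorial : ℝ) / ((p.factorial : ℝ) * (((N-m)-p).factorial : ℝ)) :=
          Nat.cast_choose ℝ (by omega)
        rw [c1]
        have hsgn : (-1:ℝ)^(m+p) = (-1:ℝ)^m * (-1:ℝ)^p := by rw [pow_add]
        rw [hsgn]
        have e4 : ((m+p:ℕ):ℝ) + 1 = ((m:ℝ)+1) + p := by push_cast; ring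
        rw [e4]
        have h5 : ((m:ℝ)+1) + p ≠ 0 := by positivity
        field_simp
      rw [Finset.sum_congr rfl simp2, ← Finset.mul_sum]
      rw [L2 (N-m) ((m:ℝ)+1) (by positivity)]
      have hPL := PL m (N-m)
      have e6 : N-m+m+1 = N+1 := by omega
      rw [e6] at hPL
      have hprodpos : (0:ℝ) < ∏ i ∈ range (N-m+1), (((m:ℝ)+1) + i) :=
        Finset.prod_pos (fun i _ => by positivity)
      rw [div_mul_div_comm, div_eq_div_iff (by positivity) (fne (N+1))]
      linear_combination (-(-1:ℝ)^m * (((N-m).factorial : ℕ) : ℝ)) * hPL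
    · -- j < m
      rw [if_neg hme]
      have hd1 : 1 ≤ m - j := by omega
      have step : ∀ p ∈ range (N-j+1),
          (1 / ((p.factorial : ℝ) * ((N-j-p).factorial : ℝ) * (((N-p : ℕ) : ℝ) + 1)))
            * ((-1:ℝ)^(N-p) * (m.factorial : ℝ) / (j.factorial : ℝ)
              * (if j ≤ m then (((N-p+m-j).choose (m-j) : ℕ) : ℝ) else 0))
          = ((-1:ℝ)^N * (m.factorial : ℝ) / ((j.factorial : ℝ) * ((m-j : ℕ):ℝ) * ((N-j).factorial : ℝ)))
            * ((-1:ℝ)^p * (((N-j).choose p : ℕ) : ℝ) * ((((N+(m-j))-p).choose ((m-j)-1) : ℕ) : ℝ)) := by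
        intro p hp
        rw [Finset.mem_range] at hp
        rw [if_pos hmj]
        have hpN : p ≤ N := by omega
        have e1 : N-p+m-j = N-p+(m-j) := by omega
        have e2 : (N+(m-j))-p = N-p+(m-j) := by omega
        rw [e1, e2]
        have hcc : ((((N-p+(m-j)).choose (m-j) : ℕ)) : ℝ) * ((m-j : ℕ) : ℝ)
            = ((((N-p+(m-j)).choose ((m-j)-1) : ℕ)) : ℝ) * (((N-p : ℕ) : ℝ) + 1) := by
          have hN := Nat.choose_succ_right_eq (N-p+(m-j)) ((m-j)-1)
          have e3 : (m-j)-1+1 = m-j := by omega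
          have e4 : N-p+(m-j) - ((m-j)-1) = (N-p)+1 := by omega
          rw [e3, e4] at hN
          exact_mod_cast congrArg (Nat.cast : ℕ → ℝ) hN
        have c3 : (((N-j).choose p : ℕ) : ℝ)
            = ((N-j).factorial : ℝ) / ((p.factorial : ℝ) * ((N-j-p).factorial : ℝ)) :=
          Nat.cast_choose ℝ (by omega)
        rw [c3]
        have hsgn : (-1:ℝ)^(N-p) = (-1:ℝ)^N * (-1:ℝ)^p := by
          have h1 : (-1:ℝ)^(N-p) * (-1:ℝ)^p = (-1:ℝ)^N := by
            rw [← pow_add]; congr 1; omega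
          have h2 : (-1:ℝ)^p * (-1:ℝ)^p = 1 := by
            rw [← pow_add]
            exact Even.neg_one_pow ⟨p, by omega⟩
          calc (-1:ℝ)^(N-p) = (-1:ℝ)^(N-p) * ((-1:ℝ)^p * (-1:ℝ)^p) := by rw [h2, mul_one]
            _ = ((-1:ℝ)^(N-p) * (-1:ℝ)^p) * (-1:ℝ)^p := by ring
            _ = (-1:ℝ)^N * (-1:ℝ)^p := by rw [h1]
        rw [hsgn]
        have h1 : ((N-p:ℕ):ℝ) + 1 ≠ 0 := by positivity
        have h2 : ((m-j:ℕ):ℝ) ≠ 0 := by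
          simp only [ne_eq, Nat.cast_eq_zero]; omega
        exact alg1 _ _ _ _ _ _ _ _ _ _ _ (fne p) (fne (N-j-p)) h1 h2 (fne j) (fne (N-j)) hcc
      rw [Finset.sum_congr rfl step, ← Finset.mul_sum]
      have hL1 := L1 (N-j) (N+(m-j)) ((m-j)-1) (by omega)
      rw [hL1, if_neg (by omega)]
      ring
  · -- m < j
    have key : ∀ p ∈ range (N-j+1),
        (1 / ((p.factorial : ℝ) * ((N-j-p).factorial : ℝ) * (((N-p : ℕ) : ℝ) + 1)))
          * ((-1:ℝ)^(N-p) * (m.factorial : ℝ) / (j.factorial : ℝ)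
            * (if j ≤ m then (((N-p+m-j).choose (m-j) : ℕ) : ℝ) else 0)) = 0 := by
      intro p _
      rw [if_neg hmj]
      ring
    rw [Finset.sum_congr rfl key, Finset.sum_const, smul_zero, if_neg (by omega)]


lemma contAux (c T : ℝ) (a b : ℕ) : Continuous (fun τ : ℝ => c * ((T - τ)^a * τ^b)) :=
  continuous_const.mul (((continuous_const.sub continuous_id).pow a).mul (continuous_pow b))

lemma alg3 (FA FB Tz s a b c e f g x F2 M2 Tm : ℝ) (ha : a ≠ 0) (hb : b ≠ 0) (hcc : c ≠ 0)
    (he : e ≠ 0) (hf : f ≠ 0) (hg : g ≠ 0) (hx : x ≠ 0) (hM : M2 ≠ 0) (hTz : Tz ≠ 0) :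
    (FA * FB / Tz * s / (a*b*c*e*f*g*x)) * (g * F2 / M2 * Tm)
      = (FA * FB / M2 * (Tm / Tz)) * (s * F2 / (a*b*c*e*f*x)) := by
  field_simp


lemma ML (N j m : ℕ) (hj : j ≤ N) (hm : m ≤ N) (T : ℝ) (hT : 0 < T) :
    (∫ τ in (0:ℝ)..T,
        (((N + j + 1).factorial : ℝ) * ((N + 1).factorial : ℝ) / T ^ (N + j + 1)) *
          (∑ p ∈ Finset.range (N - j + 1), ∑ q ∈ Finset.range (j + 1),
            (T - τ) ^ (p + q) * (-τ) ^ (N - p - q) /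
              ((p.factorial : ℝ) * q.factorial * (N - j - p).factorial *
                (j - q).factorial * (N - p - q).factorial * (p + q).factorial *
                ((N:ℝ) - p + 1))) * τ ^ m)
      = if m = j then (-1:ℝ)^j * (j.factorial : ℝ) else 0 := by
  have hTne : T ≠ 0 := ne_of_gt hT
  set A : ℝ := ((N + j + 1).factorial : ℝ) * ((N + 1).factorial : ℝ) / T ^ (N + j + 1) with hA
  set c : ℕ → ℕ → ℝ := fun p q =>
      A * (-1:ℝ)^(N-p-q) /
        ((p.factorial : ℝ) * q.factorial * (N - j - p).factorial *
          (j - q).factorial * (N - p - q).factorial * (p + q).factorial *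
          (((N - p : ℕ) : ℝ) + 1)) with hc
  have integrand : ∀ τ : ℝ,
      A * (∑ p ∈ Finset.range (N - j + 1), ∑ q ∈ Finset.range (j + 1),
            (T - τ) ^ (p + q) * (-τ) ^ (N - p - q) /
              ((p.factorial : ℝ) * q.factorial * (N - j - p).factorial *
                (j - q).factorial * (N - p - q).factorial * (p + q).factorial *
                ((N:ℝ) - p + 1))) * τ ^ m
      = ∑ p ∈ Finset.range (N - j + 1), ∑ q ∈ Finset.range (j + 1),
          c p q * ((T - τ) ^ (p + q) * τ ^ (N - p - q + m)) := by
    intro τ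
    rw [Finset.mul_sum, Finset.sum_mul]
    apply Finset.sum_congr rfl
    intro p hp
    rw [Finset.mul_sum, Finset.sum_mul]
    apply Finset.sum_congr rfl
    intro q hq
    rw [Finset.mem_range] at hp hq
    have hcast : ((N:ℝ) - p + 1) = ((N - p : ℕ) : ℝ) + 1 := by
      rw [Nat.cast_sub (by omega)]
    rw [hc, hcast, neg_pow, pow_add τ]
    ring
  rw [intervalIntegral.integral_congr
    (g := fun τ => ∑ p ∈ Finset.range (N - j + 1), ∑ q ∈ Finset.range (j + 1),
      c p q * ((T - τ) ^ (p + q) * τ ^ (N - p - q + m))) (fun τ _ => integrand τ)]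
  have swap1 := intervalIntegral.integral_finset_sum (μ := MeasureTheory.volume) (a := (0:ℝ)) (b := T)
    (s := Finset.range (N - j + 1))
    (f := fun p τ => ∑ q ∈ Finset.range (j + 1), c p q * ((T - τ) ^ (p + q) * τ ^ (N - p - q + m)))
    (fun p _ => (continuous_finset_sum _ (fun q _ => contAux _ _ _ _)).intervalIntegrable _ _)
  rw [swap1]
  have inner_int : ∀ p ∈ Finset.range (N - j + 1),
      (∫ τ in (0:ℝ)..T, ∑ q ∈ Finset.range (j + 1), c p q * ((T - τ) ^ (p + q) * τ ^ (N - p - q + m)))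
      = ∑ q ∈ Finset.range (j + 1), c p q *
          (((p+q).factorial : ℝ) * ((N-p-q+m).factorial : ℝ) / (((N+m+1).factorial : ℕ) : ℝ) * T^(N+m+1)) := by
    intro p hp
    rw [Finset.mem_range] at hp
    have swap2 := intervalIntegral.integral_finset_sum (μ := MeasureTheory.volume) (a := (0:ℝ)) (b := T)
      (s := Finset.range (j + 1))
      (f := fun q τ => c p q * ((T - τ) ^ (p + q) * τ ^ (N - p - q + m)))
      (fun q _ => (contAux _ _ _ _).intervalIntegrable _ _)
    rw [swap2]
    apply Finset.sum_congr rfl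
    intro q hq
    rw [Finset.mem_range] at hq
    rw [intervalIntegral.integral_const_mul, Beta]
    have e : (p+q) + (N-p-q+m) + 1 = N+m+1 := by omega
    rw [e]
  rw [Finset.sum_congr rfl inner_int]
  have step2 : ∀ p ∈ Finset.range (N - j + 1), ∀ q ∈ Finset.range (j + 1),
      c p q * (((p+q).factorial : ℝ) * ((N-p-q+m).factorial : ℝ) / (((N+m+1).factorial : ℕ) : ℝ) * T^(N+m+1))
      = ((((N+j+1).factorial : ℕ) : ℝ) * (((N+1).factorial : ℕ) : ℝ) / (((N+m+1).factorial : ℕ) : ℝ)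
          * (T^(N+m+1) / T^(N+j+1)))
        * ((-1:ℝ)^(N-p-q) * ((N-p-q+m).factorial : ℝ) /
            ((p.factorial : ℝ) * (q.factorial : ℝ) * ((N-j-p).factorial : ℝ) * ((j-q).factorial : ℝ)
              * ((N-p-q).factorial : ℝ) * (((N-p : ℕ) : ℝ) + 1))) := by
    intro p hp q hq
    rw [hc]
    have hx : ((N-p:ℕ):ℝ) + 1 ≠ 0 := by positivity
    exact alg3 _ _ _ _ _ _ _ _ _ _ _ _ _ _ (fne p) (fne q) (fne (N-j-p)) (fne (j-q))
      (fne (N-p-q)) (fne (p+q)) hx (fne (N+m+1)) (pow_ne_zero _ hTne)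
  have tot : ∑ p ∈ Finset.range (N-j+1), ∑ q ∈ Finset.range (j+1),
      c p q * (((p+q).factorial : ℝ) * ((N-p-q+m).factorial : ℝ) / (((N+m+1).factorial : ℕ) : ℝ) * T^(N+m+1))
      = ((((N+j+1).factorial : ℕ) : ℝ) * (((N+1).factorial : ℕ) : ℝ) / (((N+m+1).factorial : ℕ) : ℝ)
          * (T^(N+m+1) / T^(N+j+1)))
        * ∑ p ∈ range (N-j+1), ∑ q ∈ range (j+1),
            (-1:ℝ)^(N-p-q) * ((N-p-q+m).factorial : ℝ) /
              ((p.factorial : ℝ) * (q.factorial : ℝ) * ((N-j-p).factorial : ℝ) * ((j-q).factorial : ℝ)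
                * ((N-p-q).factorial : ℝ) * (((N-p : ℕ) : ℝ) + 1)) := by
    rw [Finset.mul_sum]
    apply Finset.sum_congr rfl
    intro p hp
    rw [Finset.mul_sum]
    apply Finset.sum_congr rfl
    intro q hq
    exact step2 p hp q hq
  rw [tot, Sid N j m hj hm]
  by_cases hme : m = j
  · subst hme
    rw [if_pos rfl, if_pos rfl]
    field_simp
  · rw [if_neg hme, if_neg hme, mul_zero]


lemma itd (N : ℕ) (c : Fin (N+1) → ℝ) (j : ℕ) :
    iteratedDeriv j (fun s : ℝ => ∑ i : Fin (N+1), c i * s ^ (i:ℕ))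
    = fun t => ∑ i : Fin (N+1), c i * (((i:ℕ).descFactorial j : ℕ) : ℝ) * t ^ ((i:ℕ) - j) := by
  induction j with
  | zero =>
    rw [iteratedDeriv_zero]
    funext t
    simp
  | succ j ih =>
    rw [iteratedDeriv_succ, ih]
    funext t
    rw [deriv_fun_sum (fun i _ => by
      apply DifferentiableAt.mul
      · exact differentiableAt_const _
      · exact differentiableAt_pow _)]
    apply Finset.sum_congr rfl
    intro i _
    rw [deriv_const_mul _ (differentiableAt_pow _), deriv_pow_field]
    have e1 : (i:ℕ) - j - 1 = (i:ℕ) - (j+1) := by omega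
    have e2 : (i:ℕ).descFactorial (j+1) = ((i:ℕ) - j) * (i:ℕ).descFactorial j :=
      Nat.descFactorial_succ _ _
    rw [e1, e2]
    push_cast
    ring


theorem stmt10 (N : ℕ) (a : Fin (N + 1) → ℝ) (y : ℝ → ℝ)
    (hy : ∀ s, y s = ∑ i : Fin (N + 1), a i / (i : ℕ).factorial * s ^ (i : ℕ))
    (j : ℕ) (hj : j ≤ N) (T t : ℝ) (hT : 0 < T) (ht : T ≤ t) :
    ∫ τ in (0:ℝ)..T,
        (((N + j + 1).factorial : ℝ) * ((N + 1).factorial : ℝ) / T ^ (N + j + 1)) *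
          (∑ κ₁ ∈ Finset.range (N - j + 1), ∑ κ₂ ∈ Finset.range (j + 1),
            (T - τ) ^ (κ₁ + κ₂) * (-τ) ^ (N - κ₁ - κ₂) /
              ((κ₁.factorial : ℝ) * κ₂.factorial * (N - j - κ₁).factorial *
                (j - κ₂).factorial * (N - κ₁ - κ₂).factorial * (κ₁ + κ₂).factorial *
                (N - κ₁ + 1))) * y (t - τ) =
      iteratedDeriv j y t := by
  have hyf : y = fun s => ∑ i : Fin (N+1), a i / (i : ℕ).factorial * s ^ (i : ℕ) := funext hy
  rw [hyf, itd N (fun i => a i / (i : ℕ).factorial) j]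
  have contS : Continuous (fun τ : ℝ => ∑ p ∈ Finset.range (N - j + 1), ∑ q ∈ Finset.range (j + 1),
      (T - τ) ^ (p + q) * (-τ) ^ (N - p - q) /
        ((p.factorial : ℝ) * q.factorial * (N - j - p).factorial *
          (j - q).factorial * (N - p - q).factorial * (p + q).factorial *
          ((N:ℝ) - p + 1))) := by
    apply continuous_finset_sum
    intro p _
    apply continuous_finset_sum
    intro q _
    exact (((continuous_const.sub continuous_id).pow _).mul ((continuous_id.neg).pow _)).div_const _
  have integrand : ∀ τ : ℝ,
      (((N + j + 1).factorial : ℝ) * ((N + 1).factorial : ℝ) / T ^ (N + j + 1)) *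
          (∑ p ∈ Finset.range (N - j + 1), ∑ q ∈ Finset.range (j + 1),
            (T - τ) ^ (p + q) * (-τ) ^ (N - p - q) /
              ((p.factorial : ℝ) * q.factorial * (N - j - p).factorial *
                (j - q).factorial * (N - p - q).factorial * (p + q).factorial *
                ((N:ℝ) - p + 1))) *
        ((fun s => ∑ i : Fin (N+1), a i / (i : ℕ).factorial * s ^ (i:ℕ)) (t - τ))
      = ∑ i : Fin (N+1), ∑ k ∈ Finset.range ((i:ℕ)+1),
          (a i / ((i:ℕ).factorial : ℝ) * t ^ ((i:ℕ)-k) * (((i:ℕ).choose k : ℕ) : ℝ) * (-1:ℝ)^k)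
            * ((((N + j + 1).factorial : ℝ) * ((N + 1).factorial : ℝ) / T ^ (N + j + 1)) *
              (∑ p ∈ Finset.range (N - j + 1), ∑ q ∈ Finset.range (j + 1),
                (T - τ) ^ (p + q) * (-τ) ^ (N - p - q) /
                  ((p.factorial : ℝ) * q.factorial * (N - j - p).factorial *
                    (j - q).factorial * (N - p - q).factorial * (p + q).factorial *
                    ((N:ℝ) - p + 1))) * τ ^ k) := by
    intro τ
    simp only []
    set W : ℝ := (((N + j + 1).factorial : ℝ) * ((N + 1).factorial : ℝ) / T ^ (N + j + 1)) *
          (∑ p ∈ Finset.range (N - j + 1), ∑ q ∈ Finset.range (j + 1),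
            (T - τ) ^ (p + q) * (-τ) ^ (N - p - q) /
              ((p.factorial : ℝ) * q.factorial * (N - j - p).factorial *
                (j - q).factorial * (N - p - q).factorial * (p + q).factorial *
                ((N:ℝ) - p + 1))) with hW
    rw [Finset.mul_sum]
    apply Finset.sum_congr rfl
    intro i _
    rw [show t - τ = -τ + t from by ring, add_pow, Finset.mul_sum, Finset.mul_sum]
    apply Finset.sum_congr rfl
    intro k hk
    rw [neg_pow]
    ring
  rw [intervalIntegral.integral_congr (g := fun τ => ∑ i : Fin (N+1), ∑ k ∈ Finset.range ((i:ℕ)+1),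
        (a i / ((i:ℕ).factorial : ℝ) * t ^ ((i:ℕ)-k) * (((i:ℕ).choose k : ℕ) : ℝ) * (-1:ℝ)^k)
          * ((((N + j + 1).factorial : ℝ) * ((N + 1).factorial : ℝ) / T ^ (N + j + 1)) *
            (∑ p ∈ Finset.range (N - j + 1), ∑ q ∈ Finset.range (j + 1),
              (T - τ) ^ (p + q) * (-τ) ^ (N - p - q) /
                ((p.factorial : ℝ) * q.factorial * (N - j - p).factorial *
                  (j - q).factorial * (N - p - q).factorial * (p + q).factorial *
                  ((N:ℝ) - p + 1))) * τ ^ k))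
    (fun τ _ => integrand τ)]
  have swap1 := intervalIntegral.integral_finset_sum (μ := MeasureTheory.volume) (a := (0:ℝ)) (b := T)
    (s := (Finset.univ : Finset (Fin (N+1))))
    (f := fun i τ => ∑ k ∈ Finset.range ((i:ℕ)+1),
        (a i / ((i:ℕ).factorial : ℝ) * t ^ ((i:ℕ)-k) * (((i:ℕ).choose k : ℕ) : ℝ) * (-1:ℝ)^k)
          * ((((N + j + 1).factorial : ℝ) * ((N + 1).factorial : ℝ) / T ^ (N + j + 1)) *
            (∑ p ∈ Finset.range (N - j + 1), ∑ q ∈ Finset.range (j + 1),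
              (T - τ) ^ (p + q) * (-τ) ^ (N - p - q) /
                ((p.factorial : ℝ) * q.factorial * (N - j - p).factorial *
                  (j - q).factorial * (N - p - q).factorial * (p + q).factorial *
                  ((N:ℝ) - p + 1))) * τ ^ k))
    (fun i _ => Continuous.intervalIntegrable
      (continuous_finset_sum _ (fun k _ =>
        continuous_const.mul ((continuous_const.mul contS).mul (continuous_pow k)))) _ _)
  rw [swap1]
  apply Finset.sum_congr rfl
  intro i _
  have swap2 := intervalIntegral.integral_finset_sum (μ := MeasureTheory.volume) (a := (0:ℝ)) (b := T)
    (s := Finset.range ((i:ℕ)+1))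
    (f := fun k τ =>
        (a i / ((i:ℕ).factorial : ℝ) * t ^ ((i:ℕ)-k) * (((i:ℕ).choose k : ℕ) : ℝ) * (-1:ℝ)^k)
          * ((((N + j + 1).factorial : ℝ) * ((N + 1).factorial : ℝ) / T ^ (N + j + 1)) *
            (∑ p ∈ Finset.range (N - j + 1), ∑ q ∈ Finset.range (j + 1),
              (T - τ) ^ (p + q) * (-τ) ^ (N - p - q) /
                ((p.factorial : ℝ) * q.factorial * (N - j - p).factorial *
                  (j - q).factorial * (N - p - q).factorial * (p + q).factorial *
                  ((N:ℝ) - p + 1))) * τ ^ k))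
    (fun k _ => Continuous.intervalIntegrable
      (continuous_const.mul ((continuous_const.mul contS).mul (continuous_pow k))) _ _)
  rw [swap2]
  have step : ∀ k ∈ Finset.range ((i:ℕ)+1),
      (∫ τ in (0:ℝ)..T,
        (a i / ((i:ℕ).factorial : ℝ) * t ^ ((i:ℕ)-k) * (((i:ℕ).choose k : ℕ) : ℝ) * (-1:ℝ)^k)
          * ((((N + j + 1).factorial : ℝ) * ((N + 1).factorial : ℝ) / T ^ (N + j + 1)) *
            (∑ p ∈ Finset.range (N - j + 1), ∑ q ∈ Finset.range (j + 1),
              (T - τ) ^ (p + q) * (-τ) ^ (N - p - q) /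
                ((p.factorial : ℝ) * q.factorial * (N - j - p).factorial *
                  (j - q).factorial * (N - p - q).factorial * (p + q).factorial *
                  ((N:ℝ) - p + 1))) * τ ^ k))
      = if k = j then
          (a i / ((i:ℕ).factorial : ℝ) * t ^ ((i:ℕ)-k) * (((i:ℕ).choose k : ℕ) : ℝ) * (-1:ℝ)^k)
            * ((-1:ℝ)^j * (j.factorial : ℝ)) else 0 := by
    intro k hk
    rw [Finset.mem_range] at hk
    have hkN : k ≤ N := by
      have := i.isLt
      omega
    rw [intervalIntegral.integral_const_mul, ML N j k hj hkN T hT]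
    by_cases hkj : k = j
    · rw [if_pos hkj, if_pos hkj]
    · rw [if_neg hkj, if_neg hkj, mul_zero]
  rw [Finset.sum_congr rfl step, Finset.sum_ite_eq' (Finset.range ((i:ℕ)+1)) j]
  simp only [Finset.mem_range]
  by_cases hji : j < (i:ℕ)+1
  · rw [if_pos hji]
    have hdesc : ((i:ℕ).descFactorial j : ℕ) = j.factorial * (i:ℕ).choose j :=
      Nat.descFactorial_eq_factorial_mul_choose _ _
    have hsq : (-1:ℝ)^j * (-1:ℝ)^j = 1 := by
      rw [← mul_pow]; norm_num
    rw [hdesc]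
    push_cast
    calc a i / ((i:ℕ).factorial : ℝ) * t ^ ((i:ℕ)-j) * (((i:ℕ).choose j : ℕ) : ℝ) * (-1:ℝ)^j
          * ((-1:ℝ)^j * (j.factorial : ℝ))
        = a i / ((i:ℕ).factorial : ℝ) * t ^ ((i:ℕ)-j) * (((i:ℕ).choose j : ℕ) : ℝ)
            * ((-1:ℝ)^j * (-1:ℝ)^j) * (j.factorial : ℝ) := by ring
      _ = a i / ((i:ℕ).factorial : ℝ) * ((j.factorial : ℝ) * (((i:ℕ).choose j : ℕ) : ℝ)) * t ^ ((i:ℕ)-j) := by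
          rw [hsq]; ring
  · rw [if_neg hji]
    have : (i:ℕ).descFactorial j = 0 :=
      Nat.descFactorial_eq_zero_iff_lt.mpr (by omega)
    rw [this]
    simp
end

section
/- For T > 0 and all τ ∈ ℝ and 0 ≤ j ≤ N, the two kernels coincide: H_j(T,τ) = G_j(T,τ), where H_j(T,τ) = ((N+j+1)!·(N+1)!/T^{N+j+1})·Σ_{κ₁=0}^{N-j}Σ_{κ₂=0}^{j} (T-τ)^{κ₁+κ₂}·(-τ)^{N-κ₁-κ₂}/(κ₁!·κ₂!·(N-j-κ₁)!·(j-κ₂)!·(N-κ₁-κ₂)!·(κ₁+κ₂)!·(N-κ₁+1)) and G_j(T,τ) = ((N+j+1)!/(T^{j+1}·j!·(N-j)!))·Σ_{k=0}^{N} ((-1)^k·(N+k+1)!/((j+k+1)·(N-k)!·(k!)²))·(τ/T)^k. -/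
open Finset

private lemma factR_ne (n : ℕ) : ((n.factorial : ℝ)) ≠ 0 := by
  exact_mod_cast n.factorial_ne_zero

/-- Vandermonde with a shift and a guard. -/
private lemma LV (j m α : ℕ) (hα : α ≤ m) :
    ∑ β ∈ range (j+1), (if α + β ≤ m then ((j.choose β * m.choose (α+β) : ℕ) : ℝ) else 0)
      = ((j + m).choose (m - α) : ℝ) := by
  have h1 : ∑ β ∈ range (j+1), (if α + β ≤ m then ((j.choose β * m.choose (α+β) : ℕ) : ℝ) else 0)
      = ∑ β ∈ range (j+m+1), (if α + β ≤ m then ((j.choose β * m.choose (α+β) : ℕ) : ℝ) else 0) := by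
    apply Finset.sum_subset
    · exact Finset.range_subset_range.2 (by omega)
    · intro β hβ hβ'
      simp only [mem_range] at hβ hβ'
      have : j.choose β = 0 := Nat.choose_eq_zero_of_lt (by omega)
      simp [this]
  have h2 : ∑ β ∈ range (j+m+1), (if α + β ≤ m then ((j.choose β * m.choose (α+β) : ℕ) : ℝ) else 0)
      = ∑ β ∈ range (m-α+1), (if α + β ≤ m then ((j.choose β * m.choose (α+β) : ℕ) : ℝ) else 0) := by
    symm
    apply Finset.sum_subset
    · exact Finset.range_subset_range.2 (by omega)
    · intro β hβ hβ'
      simp only [mem_range] at hβ hβ'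
      have : ¬ (α + β ≤ m) := by omega
      simp [this]
  rw [h1, h2]
  have h3 : ((j + m).choose (m - α) : ℕ) = ∑ β ∈ range (m-α+1), j.choose β * m.choose (m-α-β) := by
    rw [Nat.add_choose_eq, Finset.Nat.sum_antidiagonal_eq_sum_range_succ_mk]
  rw [h3]
  push_cast
  apply Finset.sum_congr rfl
  intro β hβ
  simp only [mem_range] at hβ
  have hg : α + β ≤ m := by omega
  rw [if_pos hg]
  have : m - α - β = m - (α+β) := by omega
  rw [this, Nat.choose_symm hg]

/-- Key single-sum identity. -/
private lemma key_s11 (p : ℕ) : ∀ q m : ℕ,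
    ∑ a ∈ range (m+1), ((p.choose a * (m+q).choose (m-a) : ℕ) : ℝ) / (q+a+1)
      = ((p+q+m+1).choose m : ℝ) / (q+m+1) := by
  induction p with
  | zero =>
    intro q m
    rw [Finset.sum_eq_single 0]
    · have h1 : ((q+m+1).choose m : ℝ) = ((m+q).choose m : ℝ) * (q+m+1) / (q+1) := by
        rw [Nat.cast_choose ℝ (by omega : m ≤ q+m+1), Nat.cast_choose ℝ (by omega : m ≤ m+q)]
        have e1 : q+m+1 - m = q+1 := by omega
        have e2 : m+q - m = q := by omega
        rw [e1, e2, Nat.factorial_succ q, Nat.factorial_succ (q+m)]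
        have e3 : q + m + 1 = (q+m)+1 := by omega
        rw [e3]
        push_cast
        field_simp
        ring
      simp only [Nat.choose_zero_right, Nat.zero_add, one_mul, Nat.sub_zero]
      rw [h1]
      have hq1 : ((q:ℝ)+1) ≠ 0 := by positivity
      have hqm1 : ((q:ℝ)+(m:ℝ)+1) ≠ 0 := by positivity
      push_cast
      field_simp
      ring
    · intro a ha hne
      have : Nat.choose 0 a = 0 := Nat.choose_eq_zero_of_lt (by omega)
      simp [this]
    · intro h
      exact absurd (Finset.mem_range.2 (by omega)) h
  | succ p ih =>
    intro q m
    cases m with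
    | zero => simp
    | succ m =>
      have hrw :
          ∑ a ∈ range (m+2), (((p+1).choose a * (m+1+q).choose (m+1-a) : ℕ) : ℝ) / (q+a+1)
          = (∑ a ∈ range (m+2), ((p.choose a * (m+1+q).choose (m+1-a) : ℕ) : ℝ) / (q+a+1))
          + (∑ t ∈ range (m+1), ((p.choose t * (m+(q+1)).choose (m-t) : ℕ) : ℝ) / (((q+1 : ℕ):ℝ)+(t:ℝ)+1)) := by
        rw [Finset.sum_range_succ' (fun a => (((p+1).choose a * (m+1+q).choose (m+1-a) : ℕ) : ℝ) / (q+a+1)) (m+1),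
            Finset.sum_range_succ' (fun a => ((p.choose a * (m+1+q).choose (m+1-a) : ℕ) : ℝ) / (q+a+1)) (m+1)]
        have split : ∑ t ∈ range (m+1),
              (((p+1).choose (t+1) * (m+1+q).choose (m+1-(t+1)) : ℕ) : ℝ) / ((q:ℝ)+((t+1 : ℕ):ℝ)+1)
            = (∑ t ∈ range (m+1), ((p.choose (t+1) * (m+1+q).choose (m+1-(t+1)) : ℕ) : ℝ) / ((q:ℝ)+((t+1 : ℕ):ℝ)+1))
            + (∑ t ∈ range (m+1), ((p.choose t * (m+(q+1)).choose (m-t) : ℕ) : ℝ) / (((q+1 : ℕ):ℝ)+(t:ℝ)+1)) := by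
          rw [← Finset.sum_add_distrib]
          apply Finset.sum_congr rfl
          intro t ht
          rw [Nat.choose_succ_succ' p t]
          have e1 : m+1-(t+1) = m - t := by omega
          have e2 : m+1+q = m+(q+1) := by omega
          rw [e1, e2]
          push_cast
          ring
        rw [split]
        norm_num
        ring
      rw [hrw, ih q (m+1), ih (q+1) m]
      -- now: C(p+q+(m+1)+1, m+1)/(q+(m+1)+1) + C(p+(q+1)+m+1, m)/((q+1)+m+1) = C((p+1)+q+(m+1)+1, m+1)/(q+(m+1)+1)
      have e3 : p+(q+1)+m+1 = p+q+(m+1)+1 := by omega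
      have e4 : (p+1)+q+(m+1)+1 = (p+q+(m+1)+1)+1 := by omega
      rw [e3, e4]
      have pas : ((p+q+(m+1)+1+1).choose (m+1) : ℝ)
          = ((p+q+(m+1)+1).choose (m+1) : ℝ) + ((p+q+(m+1)+1).choose m : ℝ) := by
        rw [Nat.choose_succ_succ' (p+q+(m+1)+1) m]
        push_cast
        ring
      rw [pas]
      push_cast
      ring

private lemma L3 (N j m : ℕ) (hj : j ≤ N) (hm : m ≤ N) :
    ∑ α ∈ range (N-j+1), ∑ β ∈ range (j+1),
      (if α + β ≤ m then
        (1:ℝ)/((N-j-α).factorial * α.factorial * (j-β).factorial * β.factorial *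
          (α+β).factorial * (m-(α+β)).factorial * ((j:ℝ)+α+1)) else 0)
    = ((N+m+1).factorial : ℝ) /
        ((N+1).factorial * j.factorial * (N-j).factorial * ((j:ℝ)+m+1) * m.factorial^2) := by
  have hstep1 : ∀ α ∈ range (N-j+1),
      (∑ β ∈ range (j+1),
        (if α + β ≤ m then
          (1:ℝ)/((N-j-α).factorial * α.factorial * (j-β).factorial * β.factorial *
            (α+β).factorial * (m-(α+β)).factorial * ((j:ℝ)+α+1)) else 0))
      = (1/(((N-j).factorial : ℝ) * j.factorial * m.factorial)) *
          (if α ≤ m then (((N-j).choose α * (m+j).choose (m-α) : ℕ) : ℝ)/((j:ℝ)+α+1) else 0) := by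
    intro α hα
    simp only [mem_range] at hα
    by_cases hαm : α ≤ m
    · rw [if_pos hαm]
      have hLV := LV j m α hαm
      have congr1 : ∀ β ∈ range (j+1),
          (if α + β ≤ m then
            (1:ℝ)/((N-j-α).factorial * α.factorial * (j-β).factorial * β.factorial *
              (α+β).factorial * (m-(α+β)).factorial * ((j:ℝ)+α+1)) else 0)
          = (1/(((N-j).factorial : ℝ) * j.factorial * m.factorial *
              (((N-j).choose α : ℕ) : ℝ)⁻¹ * ((j:ℝ)+α+1))) *
            (if α + β ≤ m then ((j.choose β * m.choose (α+β) : ℕ) : ℝ) else 0) := by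
        intro β hβ
        simp only [mem_range] at hβ
        by_cases hg : α + β ≤ m
        · rw [if_pos hg, if_pos hg]
          have hc1 : ((j.choose β : ℕ) : ℝ) = j.factorial / (β.factorial * (j-β).factorial) :=
            Nat.cast_choose ℝ (by omega)
          have hc2 : ((m.choose (α+β) : ℕ) : ℝ)
              = m.factorial / ((α+β).factorial * (m-(α+β)).factorial) :=
            Nat.cast_choose ℝ hg
          have hc3 : (((N-j).choose α : ℕ) : ℝ)
              = (N-j).factorial / (α.factorial * (N-j-α).factorial) :=
            Nat.cast_choose ℝ (by omega)
          push_cast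
          rw [hc1, hc2, hc3]
          have hja : ((j:ℝ)+α+1) ≠ 0 := by positivity
          field_simp
        · rw [if_neg hg, if_neg hg, mul_zero]
      rw [Finset.sum_congr rfl congr1, ← Finset.mul_sum, hLV]
      have hc3 : (((N-j).choose α : ℕ) : ℝ)
          = (N-j).factorial / (α.factorial * (N-j-α).factorial) :=
        Nat.cast_choose ℝ (by omega)
      have hsy : ((m+j).choose (m-α) : ℕ) = (j+m).choose (m-α) := by rw [Nat.add_comm m j]
      rw [hsy]
      have hja : ((j:ℝ)+α+1) ≠ 0 := by positivity
      have hch : (((N-j).choose α : ℕ) : ℝ) ≠ 0 := by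
        rw [hc3]
        positivity
      push_cast
      rw [hc3] at hch ⊢
      field_simp
    · rw [if_neg hαm]
      rw [Finset.sum_eq_zero, mul_zero]
      intro β hβ
      rw [if_neg (by omega)]
  rw [Finset.sum_congr rfl hstep1, ← Finset.mul_sum]
  have hstep2 : ∑ α ∈ range (N-j+1),
      (if α ≤ m then (((N-j).choose α * (m+j).choose (m-α) : ℕ) : ℝ)/((j:ℝ)+α+1) else 0)
      = ∑ α ∈ range (m+1), (((N-j).choose α * (m+j).choose (m-α) : ℕ) : ℝ)/((j:ℝ)+α+1) := by
    have e1 : ∑ α ∈ range (N-j+1),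
        (if α ≤ m then (((N-j).choose α * (m+j).choose (m-α) : ℕ) : ℝ)/((j:ℝ)+α+1) else 0)
        = ∑ α ∈ range (N+m+2),
        (if α ≤ m then (((N-j).choose α * (m+j).choose (m-α) : ℕ) : ℝ)/((j:ℝ)+α+1) else 0) := by
      apply Finset.sum_subset (Finset.range_subset_range.2 (by omega))
      intro α hα hα'
      simp only [mem_range] at hα hα'
      by_cases hg : α ≤ m
      · rw [if_pos hg]
        have : (N-j).choose α = 0 := Nat.choose_eq_zero_of_lt (by omega)
        simp [this]
      · rw [if_neg hg]
    have e2 : ∑ α ∈ range (N+m+2),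
        (if α ≤ m then (((N-j).choose α * (m+j).choose (m-α) : ℕ) : ℝ)/((j:ℝ)+α+1) else 0)
        = ∑ α ∈ range (m+1),
        (if α ≤ m then (((N-j).choose α * (m+j).choose (m-α) : ℕ) : ℝ)/((j:ℝ)+α+1) else 0) := by
      symm
      apply Finset.sum_subset (Finset.range_subset_range.2 (by omega))
      intro α hα hα'
      simp only [mem_range] at hα hα'
      rw [if_neg (by omega)]
    rw [e1, e2]
    apply Finset.sum_congr rfl
    intro α hα
    simp only [mem_range] at hα
    rw [if_pos (by omega)]
  rw [hstep2]
  have hkey := key_s11 (N-j) j m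
  rw [show N-j+j+m+1 = N+m+1 by omega] at hkey
  rw [hkey]
  have hNm : ((N+m+1).choose m : ℝ)
      = (N+m+1).factorial / (m.factorial * (N+1).factorial) := by
    rw [Nat.cast_choose ℝ (by omega : m ≤ N+m+1), show N+m+1-m = N+1 by omega]
  rw [hNm]
  have h1 : ((j:ℝ)+m+1) ≠ 0 := by positivity
  field_simp

private lemma star (N j k : ℕ) (hj : j ≤ N) (hk : k ≤ N) :
    ∑ κ₁ ∈ range (N-j+1), ∑ κ₂ ∈ range (j+1),
      (((κ₁+κ₂).choose (N-k) : ℕ) : ℝ) /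
        ((κ₁.factorial : ℝ) * κ₂.factorial * (N-j-κ₁).factorial * (j-κ₂).factorial *
          (N-κ₁-κ₂).factorial * (κ₁+κ₂).factorial * ((N:ℝ)-(κ₁:ℝ)+1))
    = ((N+k+1).factorial : ℝ) /
        ((N+1).factorial * j.factorial * (N-j).factorial * ((j:ℝ)+k+1) *
          (N-k).factorial * k.factorial^2) := by
  set F : ℕ → ℕ → ℝ := fun κ₁ κ₂ =>
    (((κ₁+κ₂).choose (N-k) : ℕ) : ℝ) /
      ((κ₁.factorial : ℝ) * κ₂.factorial * (N-j-κ₁).factorial * (j-κ₂).factorial *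
        (N-κ₁-κ₂).factorial * (κ₁+κ₂).factorial * ((N:ℝ)-(κ₁:ℝ)+1)) with hF
  have refl1 : ∑ κ₁ ∈ range (N-j+1), ∑ κ₂ ∈ range (j+1), F κ₁ κ₂
      = ∑ α ∈ range (N-j+1), ∑ κ₂ ∈ range (j+1), F (N-j-α) κ₂ := by
    rw [← Finset.sum_range_reflect (fun κ₁ => ∑ κ₂ ∈ range (j+1), F κ₁ κ₂) (N-j+1)]
    apply Finset.sum_congr rfl
    intro α hα
    congr 1
  have refl2 : ∀ α ∈ range (N-j+1),
      ∑ κ₂ ∈ range (j+1), F (N-j-α) κ₂ = ∑ β ∈ range (j+1), F (N-j-α) (j-β) := by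
    intro α hα
    rw [← Finset.sum_range_reflect (fun κ₂ => F (N-j-α) κ₂) (j+1)]
    apply Finset.sum_congr rfl
    intro β hβ
    congr 1
  have perterm : ∀ α ∈ range (N-j+1), ∀ β ∈ range (j+1),
      F (N-j-α) (j-β)
      = (1/((N-k).factorial : ℝ)) *
        (if α + β ≤ k then
          (1:ℝ)/((N-j-α).factorial * α.factorial * (j-β).factorial * β.factorial *
            (α+β).factorial * (k-(α+β)).factorial * ((j:ℝ)+α+1)) else 0) := by
    intro α hα β hβ
    simp only [mem_range] at hα hβ
    have hA : N-j-(N-j-α) = α := by omega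
    have hB : j-(j-β) = β := by omega
    have hC : (N-j-α)+(j-β) = N-(α+β) := by omega
    have hD : N-(N-j-α)-(j-β) = α+β := by omega
    have hE : ((N:ℝ)-((N-j-α : ℕ):ℝ)+1) = ((j:ℝ)+α+1) := by
      rw [Nat.cast_sub (by omega : α ≤ N - j), Nat.cast_sub hj]
      ring
    simp only [hF]
    rw [hA, hB, hC, hD, hE]
    by_cases hg : α + β ≤ k
    · rw [if_pos hg]
      have hch : (((N-(α+β)).choose (N-k) : ℕ) : ℝ)
          = ((N-(α+β)).factorial : ℝ) / ((N-k).factorial * (k-(α+β)).factorial) := by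
        rw [Nat.cast_choose ℝ (by omega : N-k ≤ N-(α+β)), show N-(α+β)-(N-k) = k-(α+β) by omega]
      rw [hch]
      have h1 : ((j:ℝ)+α+1) ≠ 0 := by positivity
      field_simp
    · rw [if_neg hg]
      have : (N-(α+β)).choose (N-k) = 0 := Nat.choose_eq_zero_of_lt (by omega)
      simp [this]
  rw [refl1, Finset.sum_congr rfl refl2]
  rw [Finset.sum_congr rfl (fun α hα => Finset.sum_congr rfl (perterm α hα)),
      Finset.sum_congr rfl (fun α (hα : α ∈ range (N-j+1)) => (Finset.mul_sum _ _ _).symm),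
      ← Finset.mul_sum, L3 N j k hj hk]
  have h2 : ((j:ℝ)+k+1) ≠ 0 := by positivity
  field_simp

theorem stmt11 (N j : ℕ) (hj : j ≤ N) (T : ℝ) (hT : 0 < T) (τ : ℝ) :
    (((N + j + 1).factorial : ℝ) * ((N + 1).factorial : ℝ) / T ^ (N + j + 1)) *
        (∑ κ₁ ∈ Finset.range (N - j + 1), ∑ κ₂ ∈ Finset.range (j + 1),
          (T - τ) ^ (κ₁ + κ₂) * (-τ) ^ (N - κ₁ - κ₂) /
            ((κ₁.factorial : ℝ) * κ₂.factorial * (N - j - κ₁).factorial *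
              (j - κ₂).factorial * (N - κ₁ - κ₂).factorial * (κ₁ + κ₂).factorial *
              (N - κ₁ + 1))) =
      (((N + j + 1).factorial : ℝ) / (T ^ (j + 1) * j.factorial * (N - j).factorial)) *
        (∑ k ∈ Finset.range (N + 1),
          ((-1 : ℝ) ^ k * ((N + k + 1).factorial : ℝ) /
              ((j + k + 1) * ((N - k).factorial : ℝ) * (k.factorial : ℝ) ^ 2)) *
            (τ / T) ^ k) := by
  have hT0 : (T:ℝ) ≠ 0 := ne_of_gt hT
  set D : ℕ → ℕ → ℝ := fun κ₁ κ₂ =>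
    ((κ₁.factorial : ℝ) * κ₂.factorial * (N - j - κ₁).factorial *
      (j - κ₂).factorial * (N - κ₁ - κ₂).factorial * (κ₁ + κ₂).factorial *
      ((N:ℝ) - (κ₁:ℝ) + 1)) with hD
  have step1 : ∀ κ₁ ∈ range (N-j+1), ∀ κ₂ ∈ range (j+1),
      (T - τ) ^ (κ₁ + κ₂) * (-τ) ^ (N - κ₁ - κ₂) / D κ₁ κ₂
      = ∑ i ∈ range (N+1), (((κ₁+κ₂).choose i : ℕ) : ℝ) * (T^i * (-τ)^(N-i)) / D κ₁ κ₂ := by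
    intro κ₁ h1 κ₂ h2
    simp only [mem_range] at h1 h2
    have hs : κ₁ + κ₂ ≤ N := by omega
    rw [sub_eq_add_neg, add_pow, Finset.sum_mul, Finset.sum_div]
    have e1 : ∀ i ∈ range (κ₁+κ₂+1),
        T^i * (-τ)^(κ₁+κ₂-i) * ((κ₁+κ₂).choose i : ℝ) * (-τ)^(N-κ₁-κ₂) / D κ₁ κ₂
        = (((κ₁+κ₂).choose i : ℕ) : ℝ) * (T^i * (-τ)^(N-i)) / D κ₁ κ₂ := by
      intro i hi
      simp only [mem_range] at hi
      have e2 : (-τ)^(κ₁+κ₂-i) * (-τ)^(N-κ₁-κ₂) = (-τ)^(N-i) := by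
        rw [← pow_add]
        congr 1
        omega
      rw [← e2]
      push_cast
      ring
    rw [Finset.sum_congr rfl e1]
    apply Finset.sum_subset (Finset.range_subset_range.2 (by omega))
    intro i hi hi'
    simp only [mem_range] at hi hi'
    have : (κ₁+κ₂).choose i = 0 := Nat.choose_eq_zero_of_lt (by omega)
    simp [this]
  have step2 :
      (∑ κ₁ ∈ range (N-j+1), ∑ κ₂ ∈ range (j+1),
        (T - τ) ^ (κ₁ + κ₂) * (-τ) ^ (N - κ₁ - κ₂) / D κ₁ κ₂)
      = ∑ k ∈ range (N+1), T^(N-k) * (-τ)^k *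
          (∑ κ₁ ∈ range (N-j+1), ∑ κ₂ ∈ range (j+1),
            (((κ₁+κ₂).choose (N-k) : ℕ) : ℝ) / D κ₁ κ₂) := by
    rw [Finset.sum_congr rfl (fun κ₁ hκ₁ => Finset.sum_congr rfl (step1 κ₁ hκ₁))]
    rw [Finset.sum_congr rfl (fun κ₁ (hκ₁ : κ₁ ∈ range (N-j+1)) => Finset.sum_comm
      (s := range (j+1)) (t := range (N+1))
      (f := fun κ₂ i => (((κ₁+κ₂).choose i : ℕ) : ℝ) * (T^i * (-τ)^(N-i)) / D κ₁ κ₂))]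
    rw [Finset.sum_comm]
    rw [← Finset.sum_range_reflect (fun i => ∑ κ₁ ∈ range (N-j+1), ∑ κ₂ ∈ range (j+1),
      (((κ₁+κ₂).choose i : ℕ) : ℝ) * (T^i * (-τ)^(N-i)) / D κ₁ κ₂) (N+1)]
    apply Finset.sum_congr rfl
    intro k hk
    simp only [mem_range] at hk
    have e3 : N + 1 - 1 - k = N - k := by omega
    rw [e3]
    rw [Finset.mul_sum]
    apply Finset.sum_congr rfl
    intro κ₁ hκ₁
    rw [Finset.mul_sum]
    apply Finset.sum_congr rfl
    intro κ₂ hκ₂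
    have e4 : N - (N - k) = k := by omega
    rw [e4]
    ring
  rw [step2, Finset.mul_sum, Finset.mul_sum]
  apply Finset.sum_congr rfl
  intro k hk
  simp only [mem_range] at hk
  have hk' : k ≤ N := by omega
  have hstar := star N j k hj hk'
  rw [hstar]
  have hjk : ((j:ℝ)+k+1) ≠ 0 := by positivity
  have epow : T ^ (N+j+1) = T^(N-k) * T^(j+1) * T^k := by
    rw [← pow_add, ← pow_add]
    congr 1
    omega
  rw [epow, neg_pow, div_pow]
  have hTk : T^k ≠ 0 := pow_ne_zero _ hT0
  have hTNk : T^(N-k) ≠ 0 := pow_ne_zero _ hT0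
  have hTj : T^(j+1) ≠ 0 := pow_ne_zero _ hT0
  field_simp
end

section
/- For T > 0 and 0 ≤ j ≤ N, the kernel G_j(T,·) reproduces derivatives of monomials at T: for every 0 ≤ m ≤ N, ∫₀^T G_j(T,σ)·(T-σ)^m dσ = m!/(m-j)! · T^{m-j} if m ≥ j, and 0 if m < j, where G_j(T,σ) = ((N+j+1)!/(T^{j+1}·j!·(N-j)!))·Σ_{k=0}^{N} ((-1)^k·(N+k+1)!/((j+k+1)·(N-k)!·(k!)²))·(σ/T)^k. -/
open Finset

lemma lemB (n : ℕ) : ∀ (c : ℕ), ∑ k ∈ Finset.range (n+1), (-1:ℝ)^k * (n.choose k) / (k + c + 1)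
    = (n.factorial * c.factorial) / ((n + c + 1).factorial) := by
  induction n with
  | zero =>
    intro c
    simp [Nat.factorial_succ]
    field_simp
  | succ n ih =>
    intro c
    have h1 : ∑ k ∈ Finset.range (n+2), (-1:ℝ)^k * ((n+1).choose k) / (k + c + 1)
        = (∑ k ∈ Finset.range (n+1), (-1:ℝ)^k * (n.choose k) / (k + c + 1))
          - ∑ k ∈ Finset.range (n+1), (-1:ℝ)^k * (n.choose k) / (k + ((c+1 : ℕ):ℝ) + 1) := by
      rw [Finset.sum_range_succ' (fun k => (-1:ℝ)^k * ((n+1).choose k) / (k + c + 1))]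
      rw [Finset.sum_range_succ' (fun k => (-1:ℝ)^k * ((n).choose k) / (k + c + 1))]
      have : ∀ k, ((n+1).choose (k+1) : ℝ) = (n.choose k : ℝ) + (n.choose (k+1) : ℝ) := by
        intro k; rw [Nat.choose_succ_succ]; push_cast; ring
      simp only [this]
      have h2 : ∑ k ∈ Finset.range (n+1), (-1:ℝ)^(k+1) * ((n.choose k : ℝ) + (n.choose (k+1):ℝ)) / (↑(k+1) + c + 1)
          = (∑ k ∈ Finset.range (n+1), (-1:ℝ)^(k+1) * (n.choose k) / (↑(k+1) + c + 1))
            + ∑ k ∈ Finset.range (n+1), (-1:ℝ)^(k+1) * (n.choose (k+1)) / (↑(k+1) + c + 1) := by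
        rw [← Finset.sum_add_distrib]
        apply Finset.sum_congr rfl; intro k _; ring
      rw [h2]
      have h3 : ∑ k ∈ Finset.range (n+1), (-1:ℝ)^(k+1) * (n.choose k) / (↑(k+1) + c + 1)
          = - ∑ k ∈ Finset.range (n+1), (-1:ℝ)^k * (n.choose k) / (↑k + ((c+1:ℕ):ℝ) + 1) := by
        rw [← Finset.sum_neg_distrib]
        apply Finset.sum_congr rfl; intro k _; push_cast; ring
      have h4 : ∑ k ∈ Finset.range (n+1), (-1:ℝ)^(k+1) * (n.choose (k+1)) / (↑(k+1) + c + 1)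
          = ∑ k ∈ Finset.range n, (-1:ℝ)^(k+1) * (n.choose (k+1)) / (↑(k+1) + c + 1) := by
        rw [Finset.sum_range_succ]
        simp
      rw [h3, h4]
      simp only [Nat.choose_zero_right]
      push_cast
      ring
    rw [h1, ih c, ih (c+1)]
    have hc1 : ((n:ℝ) + c + 2) ≠ 0 := by positivity
    have e1 : ((n + (c+1) + 1).factorial : ℝ) = ((n:ℝ) + c + 2) * ((n+c+1).factorial : ℝ) := by
      have h : n + (c+1) + 1 = (n + c + 1) + 1 := by ring
      rw [h, Nat.factorial_succ]; push_cast; ring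
    have e2 : (((n+1) + c + 1).factorial : ℝ) = ((n:ℝ) + c + 2) * ((n+c+1).factorial :ℝ) := by
      have h : (n+1) + c + 1 = (n + c + 1) + 1 := by ring
      rw [h, Nat.factorial_succ]; push_cast; ring
    have e3 : ((n+1).factorial : ℝ) = ((n:ℝ)+1) * (n.factorial : ℝ) := by
      rw [Nat.factorial_succ]; push_cast; ring
    have e4 : (((c+1)).factorial : ℝ) = ((c:ℝ)+1) * (c.factorial : ℝ) := by
      rw [Nat.factorial_succ]; push_cast; ring
    rw [e1, e2, e3, e4]
    have hf1 : ((n+c+1).factorial : ℝ) ≠ 0 := by positivity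
    field_simp
    ring

lemma alt_diff (N : ℕ) (g : ℕ → ℝ) :
    ∑ k ∈ Finset.range (N+2), (-1:ℝ)^k * ((N+1).choose k) * g k
      = ∑ k ∈ Finset.range (N+1), (-1:ℝ)^k * (N.choose k) * (g k - g (k+1)) := by
  rw [Finset.sum_range_succ' (fun k => (-1:ℝ)^k * ((N+1).choose k) * g k)]
  have hps : ∀ k, ((N+1).choose (k+1) : ℝ) = N.choose k + N.choose (k+1) := by
    intro k; rw [Nat.choose_succ_succ]; push_cast; ring
  simp only [hps]
  have h2 : ∑ k ∈ Finset.range (N+1), (-1:ℝ)^(k+1) * ((N.choose k : ℝ) + N.choose (k+1)) * g (k+1)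
      = (- ∑ k ∈ Finset.range (N+1), (-1:ℝ)^k * (N.choose k) * g (k+1))
        - ∑ k ∈ Finset.range N, (-1:ℝ)^k * (N.choose (k+1)) * g (k+1) := by
    have h4 : ∑ k ∈ Finset.range (N+1), (-1:ℝ)^k * (N.choose (k+1)) * g (k+1)
        = ∑ k ∈ Finset.range N, (-1:ℝ)^k * (N.choose (k+1)) * g (k+1) := by
      rw [Finset.sum_range_succ]; simp
    rw [← h4, ← Finset.sum_neg_distrib, ← Finset.sum_sub_distrib]
    apply Finset.sum_congr rfl; intro k _; ring
  rw [h2]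
  have h5 : ∑ k ∈ Finset.range (N+1), (-1:ℝ)^k * (N.choose k) * (g k - g (k+1))
      = (∑ k ∈ Finset.range (N+1), (-1:ℝ)^k * (N.choose k) * g k)
        - ∑ k ∈ Finset.range (N+1), (-1:ℝ)^k * (N.choose k) * g (k+1) := by
    rw [← Finset.sum_sub_distrib]
    apply Finset.sum_congr rfl; intro k _; ring
  rw [h5]
  rw [Finset.sum_range_succ' (fun k => (-1:ℝ)^k * ((N).choose k) * g k)]
  have h6 : ∑ x ∈ Finset.range N, (-1:ℝ)^(x+1) * (N.choose (x+1)) * g (x+1)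
      = - ∑ x ∈ Finset.range N, (-1:ℝ)^x * (N.choose (x+1)) * g (x+1) := by
    rw [← Finset.sum_neg_distrib]
    apply Finset.sum_congr rfl; intro k _; ring
  rw [h6]
  simp only [Nat.choose_zero_right, Nat.cast_one]
  ring

lemma lemC (N : ℕ) : ∀ a b : ℕ, b < N →
    ∑ k ∈ Finset.range (N+1), (-1:ℝ)^k * (N.choose k) * ((k+a).choose b) = 0 := by
  induction N with
  | zero => intro a b hb; omega
  | succ N ih =>
    intro a b hb
    rw [show N + 1 + 1 = N + 2 from rfl,
      alt_diff N (fun k => (((k+a).choose b : ℕ) : ℝ))]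
    cases b with
    | zero => simp
    | succ b =>
      have key : ∀ k : ℕ, ((((k+a).choose (b+1) : ℕ)) : ℝ) - (((k+1+a).choose (b+1) : ℕ) : ℝ)
          = -(((k+a).choose b : ℕ) : ℝ) := by
        intro k
        have h : (k+1+a).choose (b+1) = (k+a).choose b + (k+a).choose (b+1) := by
          rw [show k+1+a = (k+a)+1 from by ring, Nat.choose_succ_succ]
        rw [h]; push_cast; ring
      simp only [key]
      have hih := ih a b (by omega)
      calc ∑ k ∈ Finset.range (N+1), (-1:ℝ)^k * (N.choose k) * (-(((k+a).choose b : ℕ):ℝ))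
          = - ∑ k ∈ Finset.range (N+1), (-1:ℝ)^k * (N.choose k) * (((k+a).choose b : ℕ):ℝ) := by
            rw [← Finset.sum_neg_distrib]; apply Finset.sum_congr rfl; intro k _; ring
        _ = 0 := by rw [hih]; ring

lemma lemA (a b : ℕ) (T : ℝ) : ∫ σ in (0:ℝ)..T, σ^a * (T-σ)^b
    = ((a.factorial * b.factorial : ℝ)/((a+b+1).factorial)) * T^(a+b+1) := by
  have hexp : ∀ σ : ℝ, σ^a * (T-σ)^b
      = ∑ i ∈ Finset.range (b+1), ((b.choose i : ℝ) * (-1)^(b-i) * T^i) * σ^(a+(b-i)) := by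
    intro σ
    rw [sub_eq_add_neg, add_pow, Finset.mul_sum]
    apply Finset.sum_congr rfl
    intro i hi
    rw [neg_pow, pow_add]
    ring
  simp only [hexp]
  rw [intervalIntegral.integral_finset_sum]
  swap
  · intro i hi
    apply Continuous.intervalIntegrable
    continuity
  have hstep : ∀ i ∈ Finset.range (b+1),
      (∫ σ in (0:ℝ)..T, ((b.choose i : ℝ) * (-1)^(b-i) * T^i) * σ^(a+(b-i)))
      = ((b.choose i : ℝ) * (-1)^(b-i) * T^i) * (T^(a+(b-i)+1) / (((a+(b-i) : ℕ) : ℝ) + 1)) := by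
    intro i hi
    rw [intervalIntegral.integral_const_mul, integral_pow]
    rw [zero_pow (by omega), sub_zero]
  rw [Finset.sum_congr rfl hstep]
  rw [← Finset.sum_range_reflect]
  trans (∑ j ∈ Finset.range (b+1), ((-1:ℝ)^j * (b.choose j) / ((j:ℝ) + a + 1)) * T^(a+b+1))
  · apply Finset.sum_congr rfl
    intro j hj
    rw [Finset.mem_range] at hj
    have h1 : b + 1 - 1 - j = b - j := by omega
    have h2 : b - (b - j) = j := by omega
    rw [h1, h2, Nat.choose_symm (by omega : j ≤ b)]
    rw [show a + b + 1 = (b - j) + (a + j + 1) from by omega, pow_add]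
    push_cast
    ring
  · rw [← Finset.sum_mul, lemB b a]
    rw [show b + a + 1 = a + b + 1 from by omega]
    ring

noncomputable def Ssum (N j m : ℕ) : ℝ :=
  ∑ k ∈ Finset.range (N+1), (-1:ℝ)^k * ((N+k+1).factorial : ℝ) /
    (((j:ℝ) + k + 1) * ((N-k).factorial : ℝ) * (k.factorial : ℝ) * ((k+m+1).factorial : ℝ))

lemma Sbase (N j : ℕ) (hj : j ≤ N) :
    Ssum N j N = (j.factorial : ℝ) / ((N+j+1).factorial : ℝ) := by
  have h1 : Ssum N j N = (1 / (N.factorial : ℝ)) *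
      ∑ k ∈ Finset.range (N+1), (-1:ℝ)^k * (N.choose k) / (k + j + 1) := by
    rw [Ssum, Finset.mul_sum]
    apply Finset.sum_congr rfl
    intro k hk
    rw [Finset.mem_range] at hk
    have hk' : k ≤ N := by omega
    have hc : ((N.choose k : ℝ)) * (k.factorial : ℝ) * ((N-k).factorial : ℝ) = (N.factorial : ℝ) := by
      exact_mod_cast Nat.choose_mul_factorial_mul_factorial hk'
    have e1 : k + N + 1 = N + k + 1 := by omega
    rw [e1]
    have hne : ((N+k+1).factorial : ℝ) ≠ 0 := by positivity
    have hne2 : ((N-k).factorial : ℝ) ≠ 0 := by positivity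
    have hne3 : (k.factorial : ℝ) ≠ 0 := by positivity
    have hne4 : ((j:ℝ) + k + 1) ≠ 0 := by positivity
    have hne5 : ((k:ℝ) + j + 1) ≠ 0 := by positivity
    rw [← hc]
    have hne6 : (N.choose k : ℝ) ≠ 0 := by
      have := Nat.choose_pos hk'; positivity
    field_simp
    ring
  rw [h1, lemB N j]
  have hne : (N.factorial : ℝ) ≠ 0 := by positivity
  field_simp

lemma Rzero (N m : ℕ) (hm : m < N) :
    ∑ k ∈ Finset.range (N+1), (-1:ℝ)^k * ((N+k+1).factorial : ℝ) /
      (((N-k).factorial : ℝ) * (k.factorial : ℝ) * ((k+m+2).factorial : ℝ)) = 0 := by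
  have hC := lemC N (N+1) (N-m-1) (by omega)
  have h1 : ∑ k ∈ Finset.range (N+1), (-1:ℝ)^k * ((N+k+1).factorial : ℝ) /
      (((N-k).factorial : ℝ) * (k.factorial : ℝ) * ((k+m+2).factorial : ℝ))
      = (((N-m-1).factorial : ℝ) / (N.factorial : ℝ)) *
        ∑ k ∈ Finset.range (N+1), (-1:ℝ)^k * (N.choose k) * ((k+(N+1)).choose (N-m-1)) := by
    rw [Finset.mul_sum]
    apply Finset.sum_congr rfl
    intro k hk
    rw [Finset.mem_range] at hk
    have hk' : k ≤ N := by omega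
    have hc : ((N.choose k : ℝ)) * (k.factorial : ℝ) * ((N-k).factorial : ℝ) = (N.factorial : ℝ) := by
      exact_mod_cast Nat.choose_mul_factorial_mul_factorial hk'
    have hb : N - m - 1 ≤ k + (N+1) := by omega
    have hc2 : (((k+(N+1)).choose (N-m-1) : ℝ)) * ((N-m-1).factorial : ℝ) * ((k+m+2).factorial : ℝ)
        = ((k+(N+1)).factorial : ℝ) := by
      have := Nat.choose_mul_factorial_mul_factorial hb
      rw [show k + (N+1) - (N-m-1) = k+m+2 from by omega] at this
      exact_mod_cast this
    rw [show N + k + 1 = k + (N+1) from by omega, ← hc2, ← hc]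
    have hne2 : ((N-k).factorial : ℝ) ≠ 0 := by positivity
    have hne3 : (k.factorial : ℝ) ≠ 0 := by positivity
    have hne4 : ((k+m+2).factorial : ℝ) ≠ 0 := by positivity
    have hne5 : ((N-m-1).factorial : ℝ) ≠ 0 := by positivity
    have hne6 : (N.choose k : ℝ) ≠ 0 := by
      have := Nat.choose_pos hk'; positivity
    field_simp
  rw [h1, hC, mul_zero]

lemma Srec (N j m : ℕ) (hm : m < N) :
    Ssum N j m = (((m:ℝ) + 1) - (j:ℝ)) * Ssum N j (m+1) := by
  have key : Ssum N j m - (((m:ℝ) + 1) - (j:ℝ)) * Ssum N j (m+1)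
      = ∑ k ∈ Finset.range (N+1), (-1:ℝ)^k * ((N+k+1).factorial : ℝ) /
          (((N-k).factorial : ℝ) * (k.factorial : ℝ) * ((k+m+2).factorial : ℝ)) := by
    rw [Ssum, Ssum, Finset.mul_sum, ← Finset.sum_sub_distrib]
    apply Finset.sum_congr rfl
    intro k hk
    have hd : ((k+(m+1)+1).factorial : ℝ) = (((k:ℝ)+m+2)) * ((k+m+1).factorial : ℝ) := by
      rw [show k+(m+1)+1 = (k+m+1)+1 from by omega, Nat.factorial_succ]
      push_cast; ring
    have he : ((k+m+2).factorial : ℝ) = (((k:ℝ)+m+2)) * ((k+m+1).factorial : ℝ) := by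
      rw [show k+m+2 = (k+m+1)+1 from rfl, Nat.factorial_succ]
      push_cast; ring
    rw [hd, he]
    have hne1 : ((j:ℝ) + k + 1) ≠ 0 := by positivity
    have hne2 : ((N-k).factorial : ℝ) ≠ 0 := by positivity
    have hne3 : (k.factorial : ℝ) ≠ 0 := by positivity
    have hne4 : ((k+m+1).factorial : ℝ) ≠ 0 := by positivity
    have hne5 : ((k:ℝ)+m+2) ≠ 0 := by positivity
    field_simp
    ring
  have hz := Rzero N m hm
  rw [hz] at key
  linarith

lemma Sclosed (N j : ℕ) (hj : j ≤ N) : ∀ d, d ≤ N →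
    Ssum N j (N - d) = if j ≤ N - d then
      ((j.factorial : ℝ) * ((N-j).factorial : ℝ)) /
        ((((N-d)-j).factorial : ℝ) * ((N+j+1).factorial : ℝ)) else 0 := by
  intro d
  induction d with
  | zero =>
    intro _
    rw [Nat.sub_zero, if_pos hj, Sbase N j hj]
    have h1 : ((N-j).factorial : ℝ) ≠ 0 := by positivity
    have h2 : ((N+j+1).factorial : ℝ) ≠ 0 := by positivity
    field_simp
  | succ d ih =>
    intro hd
    have hd' : d ≤ N := by omega
    have hm : N - (d+1) < N := by omega
    have hstep := Srec N j (N - (d+1)) hm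
    have hsucc : N - (d+1) + 1 = N - d := by omega
    rw [hsucc] at hstep
    rw [hstep, ih hd']
    by_cases h1 : j ≤ N - (d+1)
    · have h2 : j ≤ N - d := by omega
      rw [if_pos h2, if_pos h1]
      have h3 : (N - d) - j = ((N - (d+1)) - j) + 1 := by omega
      rw [h3, Nat.factorial_succ]
      have hc : ((N:ℝ) - (d+1) + 1 - j) = (((N - (d+1)) - j : ℕ) : ℝ) + 1 := by
        have e1 : ((N - (d+1) : ℕ) : ℝ) = (N:ℝ) - (d+1) := by
          push_cast [Nat.cast_sub (by omega : d+1 ≤ N)]; ring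
        have e2 : (((N - (d+1)) - j : ℕ) : ℝ) = (N:ℝ) - (d+1) - j := by
          push_cast [Nat.cast_sub (by omega : j ≤ N - (d+1)), Nat.cast_sub (by omega : d+1 ≤ N)]
          ring
        rw [e2]; ring
      have hcc : (((N - (d+1) : ℕ) : ℝ) + 1 - j) = (((N - (d+1)) - j : ℕ) : ℝ) + 1 := by
        push_cast [Nat.cast_sub (by omega : j ≤ N - (d+1)), Nat.cast_sub (by omega : d+1 ≤ N)]
        ring
      rw [hcc]
      have hne1 : ((((N - (d+1)) - j).factorial : ℝ)) ≠ 0 := by positivity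
      have hne2 : ((N+j+1).factorial : ℝ) ≠ 0 := by positivity
      have hne3 : (((N - (d+1)) - j : ℕ) : ℝ) + 1 ≠ 0 := by positivity
      set X : ℕ := (N - (d+1)) - j with hX
      field_simp
      ring
      norm_num
    · rw [if_neg h1]
      by_cases h2 : j ≤ N - d
      · have h3 : j = N - d := by omega
        have h4 : (((N - (d+1) : ℕ)) : ℝ) + 1 - (j:ℝ) = 0 := by
          rw [show ((N - (d+1) : ℕ) : ℝ) = (N:ℝ) - (d+1) from by
            push_cast [Nat.cast_sub (by omega : d+1 ≤ N)]; ring]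
          rw [show (j:ℝ) = ((N - d : ℕ) : ℝ) from by rw [h3]]
          push_cast [Nat.cast_sub (by omega : d ≤ N)]
          ring
        rw [h4]; ring
      · rw [if_neg h2]; ring

lemma lemS (N j m : ℕ) (hj : j ≤ N) (hm : m ≤ N) :
    Ssum N j m = if j ≤ m then
      ((j.factorial : ℝ) * ((N-j).factorial : ℝ)) /
        (((m-j).factorial : ℝ) * ((N+j+1).factorial : ℝ)) else 0 := by
  have h := Sclosed N j hj (N - m) (by omega)
  rw [show N - (N - m) = m from by omega] at h
  exact h



theorem stmt13 (N j m : ℕ) (hj : j ≤ N) (hm : m ≤ N) (T : ℝ) (hT : 0 < T) :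
    ∫ σ in (0:ℝ)..T,
        (((N + j + 1).factorial : ℝ) / (T ^ (j + 1) * j.factorial * (N - j).factorial)) *
          (∑ k ∈ Finset.range (N + 1),
            ((-1 : ℝ) ^ k * ((N + k + 1).factorial : ℝ) /
                ((j + k + 1) * ((N - k).factorial : ℝ) * (k.factorial : ℝ) ^ 2)) *
              (σ / T) ^ k) * (T - σ) ^ m =
      if j ≤ m then (m.factorial : ℝ) / (m - j).factorial * T ^ (m - j) else 0 := by
  have hT' : T ≠ 0 := ne_of_gt hT
  have hrw : ∀ σ : ℝ,
      (((N + j + 1).factorial : ℝ) / (T ^ (j + 1) * j.factorial * (N - j).factorial)) *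
          (∑ k ∈ Finset.range (N + 1),
            ((-1 : ℝ) ^ k * ((N + k + 1).factorial : ℝ) /
                ((j + k + 1) * ((N - k).factorial : ℝ) * (k.factorial : ℝ) ^ 2)) *
              (σ / T) ^ k) * (T - σ) ^ m
      = ∑ k ∈ Finset.range (N + 1),
          ((((N + j + 1).factorial : ℝ) / (T ^ (j + 1) * j.factorial * (N - j).factorial)) *
            ((-1 : ℝ) ^ k * ((N + k + 1).factorial : ℝ) /
                (((j:ℝ) + k + 1) * ((N - k).factorial : ℝ) * (k.factorial : ℝ) ^ 2)) / T^k) *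
            (σ^k * (T - σ)^m) := by
    intro σ
    rw [Finset.mul_sum, Finset.sum_mul]
    apply Finset.sum_congr rfl
    intro k hk
    rw [div_pow]
    ring
  simp only [hrw]
  rw [intervalIntegral.integral_finset_sum]
  swap
  · intro k hk
    apply Continuous.intervalIntegrable
    fun_prop
  simp only [intervalIntegral.integral_const_mul, lemA]
  have key : ∑ k ∈ Finset.range (N + 1),
      ((((N + j + 1).factorial : ℝ) / (T ^ (j + 1) * j.factorial * (N - j).factorial)) *
            ((-1 : ℝ) ^ k * ((N + k + 1).factorial : ℝ) /
                (((j:ℝ) + k + 1) * ((N - k).factorial : ℝ) * (k.factorial : ℝ) ^ 2)) / T^k) *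
          (((k.factorial * m.factorial : ℝ)/((k+m+1).factorial)) * T^(k+m+1))
      = (((N + j + 1).factorial : ℝ) / (T ^ (j + 1) * j.factorial * (N - j).factorial))
          * (m.factorial : ℝ) * T^(m+1) * Ssum N j m := by
    rw [Ssum, Finset.mul_sum]
    apply Finset.sum_congr rfl
    intro k hk
    rw [show k + m + 1 = k + (m+1) from by omega, pow_add]
    have h1 : ((j:ℝ) + k + 1) ≠ 0 := by positivity
    have h2 : ((N-k).factorial : ℝ) ≠ 0 := by positivity
    have h3 : (k.factorial : ℝ) ≠ 0 := by positivity
    have h4 : ((k+m+1).factorial : ℝ) ≠ 0 := by positivity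
    have h5 : (j.factorial : ℝ) ≠ 0 := by positivity
    have h6 : ((N-j).factorial : ℝ) ≠ 0 := by positivity
    field_simp
    ring
  rw [key, lemS N j m hj hm]
  by_cases hjm : j ≤ m
  · rw [if_pos hjm, if_pos hjm]
    have hpow : T^(m+1) = T^(j+1) * T^(m-j) := by
      rw [← pow_add]; congr 1; omega
    rw [hpow]
    have h5 : (j.factorial : ℝ) ≠ 0 := by positivity
    have h6 : ((N-j).factorial : ℝ) ≠ 0 := by positivity
    have h7 : ((N+j+1).factorial : ℝ) ≠ 0 := by positivity
    have h8 : ((m-j).factorial : ℝ) ≠ 0 := by positivity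
    field_simp
  · rw [if_neg hjm, if_neg hjm]
    ring
end

section
/- For natural numbers i, j ≥ 1 and N with i, j ≤ N+1, the following binomial identity holds: Σ_{k=1}^{N+1} (1/(i+k-1)) · (-1)^{k+j} · (k+j-1) · C(N+k, N+1-j) · C(N+j, N+1-k) · C(k+j-2, k-1)² = δ_{ij} (Kronecker delta), i.e., the Hilbert matrix times the claimed inverse is the identity. -/
open Finset

lemma natA (n : ℕ) : ∏ m ∈ Icc 1 n, (n + 1 - m) = Nat.factorial n := by
  rw [← Finset.prod_Ico_id_eq_factorial, show Finset.Ico 1 (n+1) = Finset.Icc 1 n from rfl]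
  refine Finset.prod_nbij' (fun m => n + 1 - m) (fun m => n + 1 - m) ?_ ?_ ?_ ?_ ?_ <;>
    (intros; simp_all [Finset.mem_Icc]; try omega)

lemma natB (a : ℕ) : ∀ n, ∏ m ∈ Icc (a + 1) (a + n), (m - a) = Nat.factorial n
  | 0 => by simp
  | n + 1 => by
    rw [show a + (n + 1) = (a + n) + 1 from rfl,
      Finset.prod_Icc_succ_top (by omega), natB a n,
      show a + n + 1 - a = n + 1 by omega, Nat.factorial_succ]
    ring

lemma natC (j : ℕ) (hj : 1 ≤ j) :
    ∀ n, Nat.factorial (j - 1) * ∏ m ∈ Icc 1 n, (j + m - 1) = Nat.factorial (j + n - 1)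
  | 0 => by simp
  | n + 1 => by
    rw [Finset.prod_Icc_succ_top (by omega), ← mul_assoc, natC j hj n,
      show j + (n + 1) - 1 = (j + n - 1) + 1 by omega, Nat.factorial_succ]
    have : j + n - 1 + 1 = j + n := by omega
    rw [this]
    ring
lemma RL1 (n k : ℕ) (hk1 : 1 ≤ k) (hkn : k ≤ n) :
    ∏ m ∈ Icc 1 n \ {k}, ((m : ℝ) - k) =
      (-1) ^ (k - 1) * Nat.factorial (k - 1) * Nat.factorial (n - k) := by
  have hsplit : Icc 1 n \ {k} = Icc 1 (k - 1) ∪ Icc (k + 1) n := by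
    ext m
    simp only [Finset.mem_sdiff, Finset.mem_Icc, Finset.mem_union, Finset.mem_singleton]
    omega
  have hdisj : Disjoint (Icc 1 (k - 1)) (Icc (k + 1) n) := by
    rw [Finset.disjoint_left]
    intro m hm hm'
    simp only [Finset.mem_Icc] at hm hm'
    omega
  rw [hsplit, Finset.prod_union hdisj]
  have h1 : ∏ m ∈ Icc 1 (k - 1), ((m : ℝ) - k) =
      (-1) ^ (k - 1) * Nat.factorial (k - 1) := by
    have hc : ∀ m ∈ Icc 1 (k - 1), ((m : ℝ) - k) = (-1) * ((k - m : ℕ) : ℝ) := by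
      intro m hm
      simp only [Finset.mem_Icc] at hm
      rw [Nat.cast_sub (by omega)]
      ring
    rw [Finset.prod_congr rfl hc, Finset.prod_mul_distrib, Finset.prod_const, Nat.card_Icc,
      ← Nat.cast_prod]
    have := natA (k - 1)
    rw [show k - 1 + 1 = k by omega] at this
    rw [this, show k - 1 + 1 - 1 = k - 1 by omega]
  have h2 : ∏ m ∈ Icc (k + 1) n, ((m : ℝ) - k) = (Nat.factorial (n - k) : ℝ) := by
    have hc : ∀ m ∈ Icc (k + 1) n, ((m : ℝ) - k) = ((m - k : ℕ) : ℝ) := by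
      intro m hm
      simp only [Finset.mem_Icc] at hm
      rw [Nat.cast_sub (by omega)]
    rw [Finset.prod_congr rfl hc, ← Nat.cast_prod]
    have := natB k (n - k)
    rw [show k + (n - k) = n by omega] at this
    rw [this]
  rw [h1, h2]

lemma RL1' (n j : ℕ) (hj1 : 1 ≤ j) (hjn : j ≤ n) :
    ∏ m ∈ Icc 1 n \ {j}, ((j : ℝ) - m) =
      (-1) ^ (n - j) * Nat.factorial (j - 1) * Nat.factorial (n - j) := by
  have hc : ∀ m ∈ Icc 1 n \ {j}, ((j : ℝ) - m) = (-1) * ((m : ℝ) - j) := fun m _ => by ring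
  have hcard : (Icc 1 n \ {j}).card = n - 1 := by
    rw [Finset.card_sdiff_of_subset (by simp [Finset.mem_Icc]; omega), Nat.card_Icc]
    simp
  rw [Finset.prod_congr rfl hc, Finset.prod_mul_distrib, Finset.prod_const, hcard,
    RL1 n j hj1 hjn]
  have hs : (-1 : ℝ) ^ (n - 1) * (-1) ^ (j - 1) = (-1) ^ (n - j) := by
    rw [← pow_add, show n - 1 + (j - 1) = (n - j) + 2 * (j - 1) by omega, pow_add, pow_mul]
    norm_num
  calc (-1 : ℝ) ^ (n - 1) * ((-1) ^ (j - 1) * Nat.factorial (j - 1) * Nat.factorial (n - j))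
      = ((-1 : ℝ) ^ (n - 1) * (-1) ^ (j - 1)) * Nat.factorial (j - 1) * Nat.factorial (n - j) := by
        ring
    _ = (-1) ^ (n - j) * Nat.factorial (j - 1) * Nat.factorial (n - j) := by rw [hs]

lemma RL2 (n j : ℕ) (hj : 1 ≤ j) :
    (Nat.factorial (j - 1) : ℝ) * ∏ m ∈ Icc 1 n, ((j : ℝ) + m - 1) =
      (Nat.factorial (j + n - 1) : ℝ) := by
  have hc : ∀ m ∈ Icc 1 n, ((j : ℝ) + m - 1) = ((j + m - 1 : ℕ) : ℝ) := by
    intro m hm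
    rw [Nat.cast_sub (by omega)]
    push_cast
    ring
  rw [Finset.prod_congr rfl hc, ← Nat.cast_prod, ← Nat.cast_mul, natC j hj n]

lemma RL3 (n k j : ℕ) (hk : 1 ≤ k) (hj1 : 1 ≤ j) (hjn : j ≤ n) :
    (Nat.factorial (k - 1) : ℝ) * (((k : ℝ) + j - 1) * ∏ m ∈ Icc 1 n \ {j}, ((1 : ℝ) - k - m)) =
      (-1) ^ (n - 1) * Nat.factorial (k + n - 1) := by
  have hc : ∀ m ∈ Icc 1 n \ {j}, ((1 : ℝ) - k - m) = (-1) * ((k : ℝ) + m - 1) :=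
    fun m _ => by ring
  have hcard : (Icc 1 n \ {j}).card = n - 1 := by
    rw [Finset.card_sdiff_of_subset (by simp [Finset.mem_Icc]; omega), Nat.card_Icc]
    simp
  have hmem : j ∈ Icc 1 n := by simp [Finset.mem_Icc]; omega
  have hP : ((k : ℝ) + j - 1) * ∏ m ∈ Icc 1 n \ {j}, ((k : ℝ) + m - 1) =
      ∏ m ∈ Icc 1 n, ((k : ℝ) + m - 1) := by
    rw [Finset.prod_eq_prod_diff_singleton_mul hmem (fun m => (k : ℝ) + m - 1)]
    ring
  rw [Finset.prod_congr rfl hc, Finset.prod_mul_distrib, Finset.prod_const, hcard]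
  calc (Nat.factorial (k - 1) : ℝ) * (((k : ℝ) + j - 1) * ((-1) ^ (n - 1) *
        ∏ m ∈ Icc 1 n \ {j}, ((k : ℝ) + m - 1)))
      = (-1) ^ (n - 1) * ((Nat.factorial (k - 1) : ℝ) *
          (((k : ℝ) + j - 1) * ∏ m ∈ Icc 1 n \ {j}, ((k : ℝ) + m - 1))) := by ring
    _ = (-1) ^ (n - 1) * Nat.factorial (k + n - 1) := by rw [hP, RL2 n k hk]
lemma key_s16 (N k j : ℕ) (hk1 : 1 ≤ k) (hkN : k ≤ N + 1) (hj1 : 1 ≤ j) (hjN : j ≤ N + 1) :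
    ((-1 : ℝ) ^ (k + j) * ((k : ℝ) + j - 1) * (Nat.choose (N + k) (N + 1 - j)) *
        (Nat.choose (N + j) (N + 1 - k)) * ((Nat.choose (k + j - 2) (k - 1) : ℕ) : ℝ) ^ 2) *
      (∏ m ∈ Icc 1 (N + 1) \ {k}, ((m : ℝ) - k)) *
      (∏ m ∈ Icc 1 (N + 1) \ {j}, ((j : ℝ) - m)) =
    (∏ m ∈ Icc 1 (N + 1), ((j : ℝ) + m - 1)) *
      ∏ m ∈ Icc 1 (N + 1) \ {j}, ((1 : ℝ) - k - m) := by
  have hfj : (Nat.factorial (j - 1) : ℝ) ≠ 0 := Nat.cast_ne_zero.mpr (Nat.factorial_ne_zero _)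
  have hfk : (Nat.factorial (k - 1) : ℝ) ≠ 0 := Nat.cast_ne_zero.mpr (Nat.factorial_ne_zero _)
  have hx : ((k : ℝ) + j - 1) ≠ 0 := by
    have h : ((k : ℝ) + j - 1) = ((k + j - 1 : ℕ) : ℝ) := by
      rw [Nat.cast_sub (by omega)]; push_cast; ring
    rw [h]
    exact Nat.cast_ne_zero.mpr (by omega)
  have e3 : ∏ m ∈ Icc 1 (N + 1), ((j : ℝ) + m - 1) =
      (Nat.factorial (N + j) : ℝ) / Nat.factorial (j - 1) := by
    rw [eq_div_iff hfj, mul_comm, show N + j = j + (N + 1) - 1 by omega]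
    exact RL2 (N + 1) j hj1
  have e4 : ∏ m ∈ Icc 1 (N + 1) \ {j}, ((1 : ℝ) - k - m) =
      (-1) ^ N * Nat.factorial (N + k) /
        (Nat.factorial (k - 1) * ((k : ℝ) + j - 1)) := by
    rw [eq_div_iff (mul_ne_zero hfk hx)]
    have h := RL3 (N + 1) k j hk1 hj1 hjN
    rw [show N + 1 - 1 = N by omega, show k + (N + 1) - 1 = N + k by omega] at h
    linear_combination h
  have c1 : ((Nat.choose (N + k) (N + 1 - j) : ℕ) : ℝ) =
      Nat.factorial (N + k) / (Nat.factorial (N + 1 - j) * Nat.factorial (k + j - 1)) := by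
    rw [Nat.cast_choose ℝ (show N + 1 - j ≤ N + k by omega),
      show N + k - (N + 1 - j) = k + j - 1 by omega]
  have c2 : ((Nat.choose (N + j) (N + 1 - k) : ℕ) : ℝ) =
      Nat.factorial (N + j) / (Nat.factorial (N + 1 - k) * Nat.factorial (k + j - 1)) := by
    rw [Nat.cast_choose ℝ (show N + 1 - k ≤ N + j by omega),
      show N + j - (N + 1 - k) = k + j - 1 by omega]
  have c3 : ((Nat.choose (k + j - 2) (k - 1) : ℕ) : ℝ) =
      Nat.factorial (k + j - 2) / (Nat.factorial (k - 1) * Nat.factorial (j - 1)) := by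
    rw [Nat.cast_choose ℝ (show k - 1 ≤ k + j - 2 by omega),
      show k + j - 2 - (k - 1) = j - 1 by omega]
  have hkj : (Nat.factorial (k + j - 1) : ℝ) = ((k : ℝ) + j - 1) * Nat.factorial (k + j - 2) := by
    rw [show k + j - 1 = (k + j - 2) + 1 by omega, Nat.factorial_succ]
    push_cast [Nat.cast_sub (show 2 ≤ k + j by omega)]
    ring
  have hs : (-1 : ℝ) ^ N = (-1 : ℝ) ^ (k + j) * (-1) ^ (k - 1) * (-1) ^ (N + 1 - j) := by
    rw [← pow_add, ← pow_add, show k + j + (k - 1) + (N + 1 - j) = N + 2 * k by omega,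
      pow_add, pow_mul]
    norm_num
  rw [RL1 (N + 1) k hk1 hkN, RL1' (N + 1) j hj1 hjN, e3, e4, c1, c2, c3, hkj, hs]
  have hf3 : (Nat.factorial (N + 1 - j) : ℝ) ≠ 0 := Nat.cast_ne_zero.mpr (Nat.factorial_ne_zero _)
  have hf4 : (Nat.factorial (N + 1 - k) : ℝ) ≠ 0 := Nat.cast_ne_zero.mpr (Nat.factorial_ne_zero _)
  have hf7 : (Nat.factorial (k + j - 2) : ℝ) ≠ 0 := Nat.cast_ne_zero.mpr (Nat.factorial_ne_zero _)
  field_simp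
theorem stmt16 (N i j : ℕ) (hi1 : 1 ≤ i) (hiN : i ≤ N + 1) (hj1 : 1 ≤ j) (hjN : j ≤ N + 1) :
    ∑ k ∈ Finset.Icc 1 (N + 1),
        (1 / ((i : ℝ) + k - 1)) * (-1 : ℝ) ^ (k + j) * ((k : ℝ) + j - 1) *
          (Nat.choose (N + k) (N + 1 - j)) * (Nat.choose (N + j) (N + 1 - k)) *
          (Nat.choose (k + j - 2) (k - 1)) ^ 2 =
      if i = j then 1 else 0 := by
  classical
  set S : Finset ℕ := Finset.Icc 1 (N + 1) with hS
  set a : ℕ → ℝ := fun k =>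
    (-1 : ℝ) ^ (k + j) * ((k : ℝ) + j - 1) * (Nat.choose (N + k) (N + 1 - j)) *
      (Nat.choose (N + j) (N + 1 - k)) * ((Nat.choose (k + j - 2) (k - 1) : ℕ) : ℝ) ^ 2 with ha
  set Pj : ℝ := ∏ m ∈ S \ {j}, ((j : ℝ) - m) with hPj
  set Dj : ℝ := ∏ m ∈ S, ((j : ℝ) + m - 1) with hDj
  set Di : ℝ := ∏ m ∈ S, ((i : ℝ) + m - 1) with hDi
  have hjS : j ∈ S := by simp only [hS, Finset.mem_Icc]; omega
  have hiS : i ∈ S := by simp only [hS, Finset.mem_Icc]; omega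
  have hPjne : Pj ≠ 0 := by
    rw [hPj]
    apply Finset.prod_ne_zero_iff.mpr
    intro m hm
    rw [Finset.mem_sdiff, Finset.mem_singleton] at hm
    have : (j : ℝ) ≠ (m : ℝ) := by exact_mod_cast fun h => hm.2 (by exact_mod_cast h.symm)
    exact sub_ne_zero_of_ne this
  have hDpos : ∀ l ∈ S, ∀ m ∈ S, ((l : ℝ) + m - 1) ≠ 0 := by
    intro l hl m hm
    rw [hS, Finset.mem_Icc] at hl hm
    have h : ((l : ℝ) + m - 1) = ((l + m - 1 : ℕ) : ℝ) := by
      rw [Nat.cast_sub (by omega)]; push_cast; ring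
    rw [h]
    exact Nat.cast_ne_zero.mpr (by omega)
  have hDine : Di ≠ 0 := by
    rw [hDi]
    exact Finset.prod_ne_zero_iff.mpr fun m hm => hDpos i hiS m hm
  have hDjne : Dj ≠ 0 := by
    rw [hDj]
    exact Finset.prod_ne_zero_iff.mpr fun m hm => hDpos j hjS m hm
  -- the polynomials
  set f : Polynomial ℝ :=
    (∑ k ∈ S, Polynomial.C (a k) * ∏ m ∈ S \ {k}, (Polynomial.X + Polynomial.C ((m : ℝ) - 1))) *
      Polynomial.C Pj with hf
  set g : Polynomial ℝ := Polynomial.C Dj * ∏ m ∈ S \ {j}, (Polynomial.X - Polynomial.C (m : ℝ))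
    with hg
  have hcardS : S.card = N + 1 := by simp [hS]
  have hcard : ∀ k ∈ S, (S \ {k}).card = N := by
    intro k hk
    rw [Finset.card_sdiff_of_subset (Finset.singleton_subset_iff.mpr hk), hcardS, Finset.card_singleton]
    omega
  set T : Finset ℝ := S.image (fun k : ℕ => 1 - (k : ℝ)) with hT
  have hcardT : T.card = N + 1 := by
    rw [hT, Finset.card_image_of_injOn, hcardS]
    intro x _ y _ h
    have : (x : ℝ) = (y : ℝ) := by dsimp at h; linarith
    exact_mod_cast this
  have hfg : f = g := by
    rw [← sub_eq_zero]
    apply Polynomial.eq_zero_of_natDegree_lt_card_of_eval_eq_zero' _ T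
    · -- evaluation
      intro x hx
      rw [hT, Finset.mem_image] at hx
      obtain ⟨k, hk, rfl⟩ := hx
      have hk1 : 1 ≤ k := by
        have := hk; rw [hS, Finset.mem_Icc] at this; exact this.1
      have hkN : k ≤ N + 1 := by
        have := hk; rw [hS, Finset.mem_Icc] at this; exact this.2
      rw [Polynomial.eval_sub, sub_eq_zero]
      have hevf : f.eval (1 - (k : ℝ)) = (a k * ∏ m ∈ S \ {k}, ((m : ℝ) - k)) * Pj := by
        rw [hf, Polynomial.eval_mul, Polynomial.eval_C]
        congr 1
        rw [Polynomial.eval_finset_sum]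
        rw [Finset.sum_eq_single_of_mem k hk]
        · rw [Polynomial.eval_mul, Polynomial.eval_C, Polynomial.eval_prod]
          congr 1
          apply Finset.prod_congr rfl
          intro m _
          rw [Polynomial.eval_add, Polynomial.eval_X, Polynomial.eval_C]
          ring
        · intro k' _ hk'
          rw [Polynomial.eval_mul, Polynomial.eval_prod]
          apply mul_eq_zero_of_right
          apply Finset.prod_eq_zero (i := k)
          · rw [Finset.mem_sdiff, Finset.mem_singleton]
            exact ⟨hk, fun h => hk' h.symm⟩
          · rw [Polynomial.eval_add, Polynomial.eval_X, Polynomial.eval_C]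
            ring
      have hevg : g.eval (1 - (k : ℝ)) = Dj * ∏ m ∈ S \ {j}, ((1 : ℝ) - k - m) := by
        rw [hg, Polynomial.eval_mul, Polynomial.eval_C, Polynomial.eval_prod]
        congr 1
        apply Finset.prod_congr rfl
        intro m _
        rw [Polynomial.eval_sub, Polynomial.eval_X, Polynomial.eval_C]
      rw [hevf, hevg, hPj, hDj, hS]
      exact key_s16 N k j hk1 hkN hj1 hjN
    · -- degree
      rw [hcardT]
      have hdf : f.natDegree ≤ N := by
        rw [hf]
        refine Polynomial.natDegree_mul_le.trans ?_
        rw [Polynomial.natDegree_C, add_zero]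
        apply Polynomial.natDegree_sum_le_of_forall_le
        intro k hk
        refine Polynomial.natDegree_mul_le.trans ?_
        rw [Polynomial.natDegree_C, zero_add]
        refine (Polynomial.natDegree_prod_le _ _).trans ?_
        refine le_trans (Finset.sum_le_sum (g := fun _ => 1)
          (fun m _ => le_of_eq (Polynomial.natDegree_X_add_C _))) ?_
        rw [Finset.sum_const, hcard k hk, smul_eq_mul, mul_one]
      have hdg : g.natDegree ≤ N := by
        rw [hg]
        refine Polynomial.natDegree_mul_le.trans ?_
        rw [Polynomial.natDegree_C, zero_add]
        refine (Polynomial.natDegree_prod_le _ _).trans ?_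
        refine le_trans (Finset.sum_le_sum (g := fun _ => 1)
          (fun m _ => le_of_eq (Polynomial.natDegree_X_sub_C _))) ?_
        rw [Finset.sum_const, hcard j hjS, smul_eq_mul, mul_one]
      have := Polynomial.natDegree_sub_le f g
      omega
  -- evaluate at i
  have hconv : ∀ k : ℕ, ∏ m ∈ S \ {k}, ((i : ℝ) + ((m : ℝ) - 1)) =
      ∏ m ∈ S \ {k}, ((i : ℝ) + m - 1) :=
    fun k => Finset.prod_congr rfl fun m _ => by ring
  have hI : (∑ k ∈ S, a k * ∏ m ∈ S \ {k}, ((i : ℝ) + m - 1)) * Pj =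
      Dj * ∏ m ∈ S \ {j}, ((i : ℝ) - m) := by
    have h := congrArg (Polynomial.eval (i : ℝ)) hfg
    simp only [hf, hg, Polynomial.eval_mul, Polynomial.eval_C, Polynomial.eval_finset_sum,
      Polynomial.eval_prod, Polynomial.eval_add, Polynomial.eval_sub, Polynomial.eval_X] at h
    simp only [hconv] at h
    exact h
  -- rewrite each term of the goal sum
  have hprodne : ∀ k ∈ S, (∏ m ∈ S \ {k}, ((i : ℝ) + m - 1)) ≠ 0 := by
    intro k hk
    exact Finset.prod_ne_zero_iff.mpr fun m hm =>
      hDpos i hiS m (Finset.mem_sdiff.mp hm).1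
  have hDik : ∀ k ∈ S, ((i : ℝ) + k - 1) * ∏ m ∈ S \ {k}, ((i : ℝ) + m - 1) = Di := by
    intro k hk
    rw [hDi, Finset.prod_eq_prod_diff_singleton_mul hk (fun m => (i : ℝ) + m - 1)]
    ring
  have hstep : ∀ k ∈ S,
      (1 / ((i : ℝ) + k - 1)) * (-1 : ℝ) ^ (k + j) * ((k : ℝ) + j - 1) *
          (Nat.choose (N + k) (N + 1 - j)) * (Nat.choose (N + j) (N + 1 - k)) *
          (Nat.choose (k + j - 2) (k - 1)) ^ 2 =
        (a k * ∏ m ∈ S \ {k}, ((i : ℝ) + m - 1)) / Di := by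
    intro k hk
    rw [← hDik k hk, mul_div_mul_right _ _ (hprodne k hk)]
    simp only [ha]
    ring
  rw [Finset.sum_congr rfl hstep, ← Finset.sum_div]
  by_cases hij : i = j
  · rw [if_pos hij]
    have hQ : ∏ m ∈ S \ {j}, ((i : ℝ) - m) = Pj := by rw [hPj, hij]
    have hDD : Di = Dj := by rw [hDi, hDj, hij]
    rw [hQ] at hI
    have hsum : (∑ k ∈ S, a k * ∏ m ∈ S \ {k}, ((i : ℝ) + m - 1)) = Dj :=
      mul_right_cancel₀ hPjne hI
    rw [hsum, hDD, div_self hDjne]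
  · rw [if_neg hij]
    have hQ : ∏ m ∈ S \ {j}, ((i : ℝ) - m) = 0 := by
      apply Finset.prod_eq_zero (i := i)
      · rw [Finset.mem_sdiff, Finset.mem_singleton]
        exact ⟨hiS, hij⟩
      · exact sub_self _
    rw [hQ, mul_zero] at hI
    have hsum : (∑ k ∈ S, a k * ∏ m ∈ S \ {k}, ((i : ℝ) + m - 1)) = 0 := by
      rcases mul_eq_zero.mp hI with h | h
      · exact h
      · exact absurd h hPjne
    rw [hsum, zero_div]
end
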